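/- arXiv:1904.11668 — 6 statements merged into one kernel-verified Lean document; each statement's English description precedes it below -/
import Mathlib

section
/- Let (M, 𝒜) be an uncertainty matroid on a finite ground set E. Then (M, 𝒜) admits a uniformly optimal basis if and only if every uncertain element of E is colored. -/
open Matroid

variable {α : Type*}

/-- `A` is an uncertainty area function for `M`: each element of the ground set gets a
nonempty bounded set of reals. -/
def IsAreaFun (M : Matroid α) (A : α → Set ℝ) : Prop :=
  ∀ e ∈ M.E, (A e).Nonempty ∧ BddBelow (A e) ∧ BddAbove (A e)

/-- A realization: a weight function with `w e ∈ A e` for every element of the ground set. -/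
def Realization (M : Matroid α) (A : α → Set ℝ) (w : α → ℝ) : Prop :=
  ∀ e ∈ M.E, w e ∈ A e

/-- The total `w`-weight of a set. -/
noncomputable def setWeight (w : α → ℝ) (T : Set α) : ℝ := ∑ᶠ e ∈ T, w e

/-- A `w`-basis: a basis of `M` of minimum total `w`-weight. -/
def IsMinBasis (M : Matroid α) (w : α → ℝ) (T : Set α) : Prop :=
  M.IsBase T ∧ ∀ B, M.IsBase B → setWeight w T ≤ setWeight w B

/-- A uniformly optimal basis (an `A`-basis): a `w`-basis for every realization `w`. -/
def IsUOB (M : Matroid α) (A : α → Set ℝ) (T : Set α) : Prop :=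
  ∀ w, Realization M A w → IsMinBasis M w T

/-- An element is certain if its area is a singleton. -/
def Certain (A : α → Set ℝ) (e : α) : Prop := ∃ r : ℝ, A e = {r}

/-- `e` is blue if every realization admits a minimum weight basis containing `e`. -/
def Blue (M : Matroid α) (A : α → Set ℝ) (e : α) : Prop :=
  ∀ w, Realization M A w → ∃ T, IsMinBasis M w T ∧ e ∈ T

/-- `e` is red if every realization admits a minimum weight basis avoiding `e`. -/
def Red (M : Matroid α) (A : α → Set ℝ) (e : α) : Prop :=
  ∀ w, Realization M A w → ∃ T, IsMinBasis M w T ∧ e ∉ T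

/-- `e` is colored if it is blue or red. -/
def Colored (M : Matroid α) (A : α → Set ℝ) (e : α) : Prop :=
  Blue M A e ∨ Red M A e

open Set

namespace UOBAux

/-- Build a realization satisfying a pointwise-realizable predicate. -/
lemma exists_realization (M : Matroid α) (A : α → Set ℝ) (Q : α → ℝ → Prop)
    (h : ∀ e ∈ M.E, ∃ x ∈ A e, Q e x) :
    ∃ w : α → ℝ, Realization M A w ∧ ∀ e ∈ M.E, Q e (w e) := by
  classical
  choose! f hf1 hf2 using h
  exact ⟨fun e => if he : e ∈ M.E then f e else 0,
    fun e he => by simpa [he] using hf1 e he,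
    fun e he => by simpa [he] using hf2 e he⟩

lemma realization_bounds {M : Matroid α} {A : α → Set ℝ} (hA : IsAreaFun M A)
    {w : α → ℝ} (hw : Realization M A w) {e : α} (he : e ∈ M.E) :
    sInf (A e) ≤ w e ∧ w e ≤ sSup (A e) :=
  ⟨csInf_le (hA e he).2.1 (hw e he), le_csSup (hA e he).2.2 (hw e he)⟩

lemma uncertain_lt {M : Matroid α} {A : α → Set ℝ} (hA : IsAreaFun M A) {e : α}
    (he : e ∈ M.E) (hc : ¬ Certain A e) : sInf (A e) < sSup (A e) := by
  obtain ⟨hne, hbb, hba⟩ := hA e he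
  rcases (csInf_le_csSup hne hbb hba).lt_or_eq with h | h
  · exact h
  · exact absurd ⟨sInf (A e), Subset.antisymm
      (fun x hx => le_antisymm (h ▸ le_csSup hba hx) (csInf_le hbb hx))
      (by rintro x rfl; obtain ⟨y, hy⟩ := hne
          have := le_antisymm (h ▸ le_csSup hba hy) (csInf_le hbb hy)
          exact this ▸ hy)⟩ hc

lemma certain_eq {A : α → Set ℝ} {e : α} (hc : Certain A e) : sInf (A e) = sSup (A e) := by
  obtain ⟨r, hr⟩ := hc
  rw [hr, csInf_singleton, csSup_singleton]


lemma setWeight_insert {w : α → ℝ} {s : Set α} {a : α} (ha : a ∉ s) (hs : s.Finite) :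
    setWeight w (insert a s) = w a + setWeight w s := by
  unfold setWeight
  exact finsum_mem_insert w ha hs

lemma setWeight_diff_singleton {w : α → ℝ} {s : Set α} {a : α} (ha : a ∈ s) (hs : s.Finite) :
    setWeight w (s \ {a}) = setWeight w s - w a := by
  have h1 : s = insert a (s \ {a}) := by simp [ha, insert_diff_singleton, insert_eq_of_mem]
  have h2 : setWeight w s = w a + setWeight w (s \ {a}) := by
    nth_rewrite 1 [h1]
    exact setWeight_insert (fun h => h.2 rfl) (hs.diff)
  linarith

lemma setWeight_exchange {w : α → ℝ} {s : Set α} {a b : α} (ha : a ∉ s) (hb : b ∈ s)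
    (hs : s.Finite) :
    setWeight w (insert a (s \ {b})) = setWeight w s + w a - w b := by
  rw [setWeight_insert (fun h => ha h.1) (hs.diff), setWeight_diff_singleton hb hs]
  ring

/-- Extract a minimal subset whose closure contains `e`. -/
lemma exists_minimal_closure_subset (M : Matroid α) {S : Set α} (hfin : S.Finite) {e : α}
    (he : e ∈ M.closure S) :
    ∃ S' ⊆ S, e ∈ M.closure S' ∧ ∀ f ∈ S', e ∉ M.closure (S' \ {f}) := by
  classical
  set F := {S' | S' ⊆ S ∧ e ∈ M.closure S'} with hF
  have hFfin : F.Finite := hfin.finite_subsets.subset fun S' hS' => hS'.1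
  have hFne : F.Nonempty := ⟨S, Subset.rfl, he⟩
  obtain ⟨S', hS'F, hmin⟩ := Set.exists_min_image F Set.ncard hFfin hFne
  refine ⟨S', hS'F.1, hS'F.2, fun f hf hcl => ?_⟩
  have hS'fin : S'.Finite := hfin.subset hS'F.1
  have : (S' \ {f}) ∈ F := ⟨(diff_subset).trans hS'F.1, hcl⟩
  have hlt : (S' \ {f}).ncard < S'.ncard := by
    have := Set.ncard_diff_singleton_of_mem hf
    have hpos : 0 < S'.ncard := (Set.ncard_pos hS'fin).mpr ⟨f, hf⟩
    omega
  exact absurd (hmin _ this) (not_le.mpr hlt)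

/-- A base squeezed between an independent set and a spanning set. -/
lemma exists_base_sandwich {M : Matroid α} {X S : Set α} (hX : M.Indep X) (hS : M.Spanning S)
    (hXS : X ⊆ S) : ∃ J, M.IsBase J ∧ X ⊆ J ∧ J ⊆ S := by
  obtain ⟨J, hJ, hXJ⟩ := hX.subset_isBasis_of_subset hXS hS.subset_ground
  refine ⟨J, hJ.indep.isBase_of_spanning ?_, hXJ, hJ.subset⟩
  rw [spanning_iff_closure_eq]
  rw [hJ.closure_eq_closure, hS.closure_eq]

lemma indep_ncard_le {M : Matroid α} {I J : Set α} (hI : M.Indep I) (hJ : M.Indep J)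
    (h : I ⊆ M.closure J) (hJfin : J.Finite) : I.ncard ≤ J.ncard := by
  obtain ⟨I', hI', hII'⟩ := hI.subset_isBasis_of_subset h (M.closure_subset_ground J)
  have hcard : I'.encard = J.encard := hI'.encard_eq_encard hJ.isBasis_closure
  have hIfin : I'.Finite := by
    rw [← Set.encard_lt_top_iff, hcard, Set.encard_lt_top_iff]; exact hJfin
  have h1 : I.encard ≤ J.encard := hcard ▸ Set.encard_mono hII'
  rw [← (hIfin.subset hII').cast_ncard_eq, ← hJfin.cast_ncard_eq] at h1
  exact_mod_cast h1


lemma base_exchange_shape {M : Matroid α} (hE : M.E.Finite) {T J : Set α} (hT : M.IsBase T)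
    {e : α} (heT : e ∉ T) {D : Set α} (hD : D ⊆ T) (hJ : M.IsBase J)
    (hXJ : insert e D ⊆ J) (hJS : J ⊆ insert e T) :
    ∃ f ∈ T, f ∉ D ∧ J = insert e (T \ {f}) := by
  have hTfin : T.Finite := hE.subset hT.subset_ground
  have hJfin : J.Finite := hE.subset hJ.subset_ground
  have hcard : J.ncard = T.ncard := hJ.ncard_eq_ncard_of_isBase hT
  have heJ : e ∈ J := hXJ (mem_insert _ _)
  have hTJ : ¬ T ⊆ J := by
    intro h
    have h2 : insert e T ⊆ J := insert_subset heJ h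
    have h3 := Set.ncard_le_ncard h2 hJfin
    rw [Set.ncard_insert_of_notMem heT hTfin] at h3
    omega
  obtain ⟨f, hfT, hfJ⟩ := not_subset.mp hTJ
  have hsub : J ⊆ insert e (T \ {f}) := by
    intro x hx
    rcases hJS hx with rfl | hxT
    · exact mem_insert _ _
    · exact mem_insert_of_mem _ ⟨hxT, fun h => hfJ (h ▸ hx)⟩
  have hc2 : (insert e (T \ {f})).ncard = T.ncard := by
    rw [Set.ncard_insert_of_notMem (fun h => heT h.1) (hTfin.diff)]
    have := Set.ncard_diff_singleton_add_one hfT hTfin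
    omega
  refine ⟨f, hfT, fun h => hfJ (hXJ (mem_insert_of_mem _ h)), ?_⟩
  exact Set.eq_of_subset_of_ncard_le hsub (by omega) ((hTfin.diff).insert e)

lemma base_shape2 {M : Matroid α} (hE : M.E.Finite) {T J : Set α} (hT : M.IsBase T)
    {e : α} (heT : e ∈ T) (hJ : M.IsBase J) (hXJ : T \ {e} ⊆ J) (heJ : e ∉ J) :
    ∃ f ∈ J, f ∉ T \ {e} ∧ J = insert f (T \ {e}) := by
  have hTfin : T.Finite := hE.subset hT.subset_ground
  have hJfin : J.Finite := hE.subset hJ.subset_ground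
  have hcard : J.ncard = T.ncard := hJ.ncard_eq_ncard_of_isBase hT
  have hXcard : (T \ {e}).ncard + 1 = T.ncard := Set.ncard_diff_singleton_add_one heT hTfin
  have hne : ¬ J ⊆ T \ {e} := by
    intro h
    have := Set.ncard_le_ncard h (hTfin.diff)
    omega
  obtain ⟨f, hfJ, hfX⟩ := not_subset.mp hne
  have hsub : insert f (T \ {e}) ⊆ J := insert_subset hfJ hXJ
  have hc2 : (insert f (T \ {e})).ncard = T.ncard := by
    rw [Set.ncard_insert_of_notMem hfX (hTfin.diff)]; omega
  exact ⟨f, hfJ, hfX, (Set.eq_of_subset_of_ncard_le hsub (by omega) hJfin).symm⟩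

lemma sum_le_of_counts (w : α → ℝ) :
    ∀ (n : ℕ) (X Y : Set α), X.Finite → Y.Finite → X.ncard = n → Y.ncard = n →
      (∀ t : ℝ, {a | a ∈ Y ∧ w a ≤ t}.ncard ≤ {a | a ∈ X ∧ w a ≤ t}.ncard) →
      setWeight w X ≤ setWeight w Y := by
  intro n
  induction n with
  | zero =>
    intro X Y hX hY hXc hYc _
    rw [(Set.ncard_eq_zero hX).mp hXc, (Set.ncard_eq_zero hY).mp hYc]
  | succ n ih =>
    intro X Y hX hY hXc hYc hcount
    have hXne : X.Nonempty := (Set.ncard_pos hX).mp (by omega)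
    have hYne : Y.Nonempty := (Set.ncard_pos hY).mp (by omega)
    obtain ⟨x, hx, hxmax⟩ := Set.exists_max_image X w hX hXne
    obtain ⟨y, hy, hymax⟩ := Set.exists_max_image Y w hY hYne
    have h1 : {a | a ∈ Y ∧ w a ≤ w y} = Y := by
      ext a; exact ⟨fun h => h.1, fun h => ⟨h, hymax a h⟩⟩
    have h2 : {a | a ∈ X ∧ w a ≤ w y} = X := by
      refine Set.eq_of_subset_of_ncard_le (fun a ha => ha.1) ?_ hX
      calc X.ncard = Y.ncard := by omega
        _ = Set.ncard {a | a ∈ Y ∧ w a ≤ w y} := by rw [h1]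
        _ ≤ _ := hcount (w y)
    have hxy : w x ≤ w y := by
      have hx2 : x ∈ {a | a ∈ X ∧ w a ≤ w y} := by rw [h2]; exact hx
      exact hx2.2
    have hrec : setWeight w (X \ {x}) ≤ setWeight w (Y \ {y}) := by
      refine ih (X \ {x}) (Y \ {y}) (hX.diff) (hY.diff) ?_ ?_ ?_
      · have := Set.ncard_diff_singleton_add_one hx hX; omega
      · have := Set.ncard_diff_singleton_add_one hy hY; omega
      · intro t
        by_cases ht : w x ≤ t
        · have hXall : {a | a ∈ X \ {x} ∧ w a ≤ t} = X \ {x} := by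
            ext a; exact ⟨fun h => h.1, fun h => ⟨h, (hxmax a h.1).trans ht⟩⟩
          have hYsub : {a | a ∈ Y \ {y} ∧ w a ≤ t} ⊆ Y \ {y} := fun a ha => ha.1
          rw [hXall]
          refine (Set.ncard_le_ncard hYsub (hY.diff)).trans ?_
          have h3 := Set.ncard_diff_singleton_add_one hx hX
          have h4 := Set.ncard_diff_singleton_add_one hy hY
          omega
        · have hXeq : {a | a ∈ X \ {x} ∧ w a ≤ t} = {a | a ∈ X ∧ w a ≤ t} := by
            ext a
            refine ⟨fun h => ⟨h.1.1, h.2⟩, fun h => ⟨⟨h.1, fun hax => ht (hax ▸ h.2)⟩, h.2⟩⟩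
          have hYsub : {a | a ∈ Y \ {y} ∧ w a ≤ t} ⊆ {a | a ∈ Y ∧ w a ≤ t} :=
            fun a ha => ⟨ha.1.1, ha.2⟩
          rw [hXeq]
          refine (Set.ncard_le_ncard hYsub (hY.subset (fun a ha => ha.1))).trans (hcount t)
    have hXi : X = insert x (X \ {x}) := by
      simp [hx, insert_diff_singleton, insert_eq_of_mem]
    have hYi : Y = insert y (Y \ {y}) := by
      simp [hy, insert_diff_singleton, insert_eq_of_mem]
    calc setWeight w X = w x + setWeight w (X \ {x}) := by
          nth_rewrite 1 [hXi]; exact setWeight_insert (fun h => h.2 rfl) (hX.diff)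
      _ ≤ w y + setWeight w (Y \ {y}) := by linarith
      _ = setWeight w Y := by
          nth_rewrite 2 [hYi]; exact (setWeight_insert (fun h => h.2 rfl) (hY.diff)).symm

lemma localopt_min {M : Matroid α} (hE : M.E.Finite) {T : Set α} (hT : M.IsBase T) (w : α → ℝ)
    (h : ∀ e ∈ M.E, e ∈ M.closure {f | f ∈ T ∧ w f ≤ w e}) :
    ∀ B, M.IsBase B → setWeight w T ≤ setWeight w B := by
  intro B hB
  have hTfin := hE.subset hT.subset_ground
  have hBfin := hE.subset hB.subset_ground
  have hcard : T.ncard = B.ncard := hT.ncard_eq_ncard_of_isBase hB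
  refine sum_le_of_counts w B.ncard T B hTfin hBfin hcard rfl (fun t => ?_)
  refine indep_ncard_le (hB.indep.subset (fun a ha => ha.1))
    (hT.indep.subset fun a ha => ha.1) ?_ (hTfin.subset fun a ha => ha.1)
  intro a ha
  have h2 := h a (hB.subset_ground ha.1)
  refine M.closure_subset_closure ?_ h2
  intro b hb
  exact ⟨hb.1, hb.2.trans ha.2⟩


lemma blue_not_mem_closure {M : Matroid α} {A : α → Set ℝ} (hE : M.E.Finite)
    (hA : IsAreaFun M A) {e : α} (he : e ∈ M.E) (hblue : Blue M A e) :
    e ∉ M.closure {f | f ∈ M.E ∧ f ≠ e ∧ sInf (A f) < sSup (A e)} := by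
  intro hecl
  classical
  set S := {f | f ∈ M.E ∧ f ≠ e ∧ sInf (A f) < sSup (A e)} with hSdef
  have hSE : S ⊆ M.E := fun f hf => hf.1
  have hSfin : S.Finite := hE.subset hSE
  obtain ⟨w, hw, hwQ⟩ := exists_realization M A
    (fun f x => f ∈ S → x < (sInf (A f) + sSup (A e)) / 2)
    (by
      intro f hf
      by_cases hfS : f ∈ S
      · obtain ⟨x, hx, hx2⟩ := exists_lt_of_csInf_lt (hA f hf).1
          (show sInf (A f) < (sInf (A f) + sSup (A e)) / 2 by linarith [hfS.2.2])
        exact ⟨x, hx, fun _ => hx2⟩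
      · obtain ⟨x, hx⟩ := (hA f hf).1
        exact ⟨x, hx, fun h => absurd h hfS⟩)
  set W := (w '' S) ∪ {sSup (A e) - 1} with hWdef
  have hWfin : W.Finite := (hSfin.image w).union (finite_singleton _)
  have hWne : W.Nonempty := ⟨sSup (A e) - 1, Or.inr rfl⟩
  have hM₀lt : sSup W < sSup (A e) := by
    rcases hWne.csSup_mem hWfin with h | h
    · obtain ⟨f, hf, hf2⟩ := h
      have h3 := hwQ f (hSE hf) hf
      have h4 := hf.2.2
      rw [← hf2]
      linarith
    · rw [h]
      linarith
  obtain ⟨b, hb, hbgt⟩ := exists_lt_of_lt_csSup (hA e he).1 hM₀lt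
  set w' := Function.update w e b with hw'def
  have hw' : Realization M A w' := by
    intro f hf
    by_cases hfe : f = e
    · subst hfe
      simpa [hw'def, Function.update_self] using hb
    · simpa [hw'def, Function.update_of_ne hfe] using hw f hf
  have hle : ∀ f ∈ S, w' f ≤ sSup W := by
    intro f hf
    rw [hw'def, Function.update_of_ne hf.2.1]
    exact le_csSup hWfin.bddAbove (Or.inl ⟨f, hf, rfl⟩)
  obtain ⟨T', hmin, heT'⟩ := hblue w' hw'
  have hT' := hmin.1
  have hT'fin : T'.Finite := hE.subset hT'.subset_ground
  have hXind : M.Indep (T' \ {e}) := hT'.indep.subset diff_subset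
  have hT'sub : T' ⊆ M.closure ((T' \ {e}) ∪ S) := by
    intro x hx
    by_cases hxe : x = e
    · subst hxe
      exact M.closure_subset_closure subset_union_right hecl
    · exact M.subset_closure _
        (union_subset ((diff_subset).trans hT'.subset_ground) hSE) (Or.inl ⟨hx, hxe⟩)
  have hsp : M.Spanning ((T' \ {e}) ∪ S) := by
    refine ⟨?_, union_subset ((diff_subset).trans hT'.subset_ground) hSE⟩
    refine subset_antisymm (M.closure_subset_ground _) ?_
    rw [← hT'.closure_eq]
    exact M.closure_subset_closure_of_subset_closure hT'sub
  obtain ⟨J, hJ, hXJ, hJsub⟩ := exists_base_sandwich hXind hsp subset_union_left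
  have heJ : e ∉ J := by
    intro h
    rcases hJsub h with h1 | h2
    · exact h1.2 rfl
    · exact h2.2.1 rfl
  obtain ⟨f, hfJ, hfX, hJeq⟩ := base_shape2 hE hT' heT' hJ hXJ heJ
  have hfS : f ∈ S := by
    rcases hJsub hfJ with h | h
    · exact absurd h hfX
    · exact h
  have hfT' : f ∉ T' := fun h => hfX ⟨h, hfS.2.1⟩
  have hwJ : setWeight w' J = setWeight w' T' + w' f - w' e := by
    rw [hJeq]
    exact setWeight_exchange hfT' heT' hT'fin
  have hlt : w' f < w' e := by
    have h6 : w' e = b := by rw [hw'def, Function.update_self]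
    have := hle f hfS
    rw [h6]
    linarith
  have := hmin.2 J hJ
  rw [hwJ] at this
  linarith

lemma red_mem_closure {M : Matroid α} {A : α → Set ℝ} (hE : M.E.Finite)
    (hA : IsAreaFun M A) {e : α} (he : e ∈ M.E) (hred : Red M A e) :
    e ∈ M.closure {f | f ∈ M.E ∧ f ≠ e ∧ sSup (A f) ≤ sInf (A e)} := by
  by_contra hecl
  classical
  set K := {f | f ∈ M.E ∧ f ≠ e ∧ sSup (A f) ≤ sInf (A e)} with hKdef
  set S := {f | f ∈ M.E ∧ f ≠ e ∧ sInf (A e) < sSup (A f)} with hSdef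
  have hSE : S ⊆ M.E := fun f hf => hf.1
  have hSfin : S.Finite := hE.subset hSE
  obtain ⟨w, hw, hwQ⟩ := exists_realization M A
    (fun f x => f ∈ S → (sSup (A f) + sInf (A e)) / 2 < x)
    (by
      intro f hf
      by_cases hfS : f ∈ S
      · obtain ⟨x, hx, hx2⟩ := exists_lt_of_lt_csSup (hA f hf).1
          (show (sSup (A f) + sInf (A e)) / 2 < sSup (A f) by linarith [hfS.2.2])
        exact ⟨x, hx, fun _ => hx2⟩
      · obtain ⟨x, hx⟩ := (hA f hf).1
        exact ⟨x, hx, fun h => absurd h hfS⟩)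
  set W := (w '' S) ∪ {sInf (A e) + 1} with hWdef
  have hWfin : W.Finite := (hSfin.image w).union (finite_singleton _)
  have hWne : W.Nonempty := ⟨sInf (A e) + 1, Or.inr rfl⟩
  have hMgt : sInf (A e) < sInf W := by
    rcases hWne.csInf_mem hWfin with h | h
    · obtain ⟨f, hf, hf2⟩ := h
      have h3 := hwQ f (hSE hf) hf
      have h4 := hf.2.2
      rw [← hf2]
      linarith
    · rw [h]
      linarith
  obtain ⟨b, hb, hblt⟩ := exists_lt_of_csInf_lt (hA e he).1 hMgt
  set w' := Function.update w e b with hw'def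
  have hw' : Realization M A w' := by
    intro f hf
    by_cases hfe : f = e
    · subst hfe
      simpa [hw'def, Function.update_self] using hb
    · simpa [hw'def, Function.update_of_ne hfe] using hw f hf
  have hge : ∀ f ∈ S, sInf W ≤ w' f := by
    intro f hf
    rw [hw'def, Function.update_of_ne hf.2.1]
    exact csInf_le hWfin.bddBelow (Or.inl ⟨f, hf, rfl⟩)
  obtain ⟨T', hmin, heT'⟩ := hred w' hw'
  have hT' := hmin.1
  have hT'fin : T'.Finite := hE.subset hT'.subset_ground
  set Y := {f | f ∈ T' ∧ sSup (A f) ≤ sInf (A e)} with hYdef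
  have hYK : Y ⊆ K := by
    intro f hf
    exact ⟨hT'.subset_ground hf.1, fun h => heT' (h ▸ hf.1), hf.2⟩
  have hYind : M.Indep Y := hT'.indep.subset fun f hf => hf.1
  have heY : e ∉ M.closure Y := fun h => hecl (M.closure_subset_closure hYK h)
  have heYm : e ∉ Y := fun h => heT' h.1
  have hXind : M.Indep (insert e Y) := by
    rw [hYind.insert_indep_iff_of_notMem heYm]
    exact ⟨he, heY⟩
  have hsp : M.Spanning (insert e T') :=
    hT'.spanning.superset (subset_insert _ _) (insert_subset he hT'.subset_ground)
  obtain ⟨J, hJ, hXJ, hJsub⟩ := exists_base_sandwich hXind hsp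
    (insert_subset_insert fun f hf => hf.1)
  obtain ⟨f, hfT', hfY, hJeq⟩ := base_exchange_shape hE hT' heT'
    (fun f hf => hf.1) hJ hXJ hJsub
  have hfS : f ∈ S := by
    refine ⟨hT'.subset_ground hfT', fun h => heT' (h ▸ hfT'), ?_⟩
    by_contra h
    exact hfY ⟨hfT', le_of_not_gt h⟩
  have hwJ : setWeight w' J = setWeight w' T' + w' e - w' f := by
    rw [hJeq]
    exact setWeight_exchange heT' hfT' hT'fin
  have hlt : w' e < w' f := by
    have h6 : w' e = b := by rw [hw'def, Function.update_self]
    have := hge f hfS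
    rw [h6]
    linarith
  have := hmin.2 J hJ
  rw [hwJ] at this
  linarith

end UOBAux

/-- An uncertainty matroid admits a uniformly optimal basis iff every uncertain element
is colored. -/
theorem exists_uob_iff_uncertain_colored (M : Matroid α) (A : α → Set ℝ)
    (hE : M.E.Finite) (hA : IsAreaFun M A) :
    (∃ T, IsUOB M A T) ↔ ∀ e ∈ M.E, ¬ Certain A e → Colored M A e := by
  classical
  constructor
  · rintro ⟨T, hT⟩ e _ _
    by_cases heT : e ∈ T
    · exact Or.inl fun w hw => ⟨T, hT w hw, heT⟩
    · exact Or.inr fun w hw => ⟨T, hT w hw, heT⟩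
  · intro hcol
    set Bs := {e | e ∈ M.E ∧ ¬ Certain A e ∧ Blue M A e} with hBsdef
    set Rs := {e | e ∈ M.E ∧ ¬ Certain A e ∧ ¬ Blue M A e} with hRsdef
    set v : α → ℝ := fun e => if e ∈ Bs then sSup (A e) else sInf (A e) with hvdef
    have hBsE : Bs ⊆ M.E := fun e he => he.1
    have hRsE : Rs ⊆ M.E := fun e he => he.1
    have hRred : ∀ e ∈ Rs, Red M A e := fun e he =>
      (hcol e he.1 he.2.1).resolve_left he.2.2
    have hunc : ∀ e ∈ M.E, ¬ Certain A e → sInf (A e) < sSup (A e) :=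
      fun e he hc => UOBAux.uncertain_lt hA he hc
    have hIS : ∀ x ∈ M.E, sInf (A x) ≤ sSup (A x) :=
      fun x hx => csInf_le_csSup (hA x hx).1 (hA x hx).2.1 (hA x hx).2.2
    have hcert : ∀ e ∈ M.E, e ∉ Bs → e ∉ Rs → sInf (A e) = sSup (A e) := by
      intro e he h1 h2
      by_cases hc : Certain A e
      · exact UOBAux.certain_eq hc
      · by_cases hb : Blue M A e
        · exact absurd ⟨he, hc, hb⟩ h1
        · exact absurd ⟨he, hc, hb⟩ h2
    -- Step 1 : Bs is independent
    have hBsIndep : M.Indep Bs := by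
      by_contra hdep
      set F := {S | S ⊆ Bs ∧ ¬ M.Indep S} with hFdef
      have hFfin : F.Finite := ((hE.subset hBsE).finite_subsets).subset fun S hS => hS.1
      obtain ⟨S, hSF, hSmin⟩ := Set.exists_min_image F Set.ncard hFfin ⟨Bs, Subset.rfl, hdep⟩
      have hSfin : S.Finite := (hE.subset hBsE).subset hSF.1
      have hSind : ∀ f ∈ S, M.Indep (S \ {f}) := by
        intro f hf
        by_contra hnd
        have hmem : (S \ {f}) ∈ F := ⟨(diff_subset).trans hSF.1, hnd⟩
        have h1 := hSmin _ hmem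
        have h2 := Set.ncard_diff_singleton_add_one hf hSfin
        omega
      have hSne : S.Nonempty := by
        rcases S.eq_empty_or_nonempty with rfl | h
        · exact absurd M.empty_indep hSF.2
        · exact h
      obtain ⟨f, hfS, hfmax⟩ := Set.exists_max_image S (fun g => sSup (A g)) hSfin hSne
      have hfBs : f ∈ Bs := hSF.1 hfS
      have hfcl : f ∈ M.closure (S \ {f}) := by
        have hind := hSind f hfS
        by_contra hcl
        apply hSF.2
        have h3 : M.Indep (insert f (S \ {f})) := by
          rw [hind.insert_indep_iff_of_notMem (fun h => h.2 rfl)]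
          exact ⟨hBsE hfBs, hcl⟩
        rwa [insert_diff_singleton, insert_eq_of_mem hfS] at h3
      have hnotsub : ¬ (S \ {f}) ⊆ {g | g ∈ M.E ∧ g ≠ f ∧ sInf (A g) < sSup (A f)} := by
        intro hsub
        exact UOBAux.blue_not_mem_closure hE hA (hBsE hfBs) hfBs.2.2
          (M.closure_subset_closure hsub hfcl)
      obtain ⟨g, hgS, hgbad⟩ := not_subset.mp hnotsub
      have hgBs : g ∈ Bs := hSF.1 hgS.1
      have hgE : g ∈ M.E := hBsE hgBs
      have hLg : sSup (A f) ≤ sInf (A g) := by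
        by_contra h
        exact hgbad ⟨hgE, hgS.2, not_le.mp h⟩
      have h4 := hunc g hgE hgBs.2.1
      have h5 := hfmax g hgS.1
      linarith
    -- Step 2 : M.E \ Rs is spanning
    have hSpan : M.Spanning (M.E \ Rs) := by
      have hsub : M.E \ Rs ⊆ M.E := diff_subset
      have hkey : ∀ e ∈ Rs, e ∈ M.closure (M.E \ Rs) := by
        by_contra hP
        push_neg at hP
        obtain ⟨e0, he0Rs, he0cl⟩ := hP
        set P := {x | x ∈ Rs ∧ x ∉ M.closure (M.E \ Rs)} with hPdef
        have hPfin : P.Finite := (hE.subset hRsE).subset fun x hx => hx.1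
        obtain ⟨e, heP, hemin⟩ := Set.exists_min_image P (fun g => sSup (A g)) hPfin
          ⟨e0, he0Rs, he0cl⟩
        have heRs := heP.1
        have heE := hRsE heRs
        have h1 := UOBAux.red_mem_closure hE hA heE (hRred e heRs)
        have hKsub : {f | f ∈ M.E ∧ f ≠ e ∧ sSup (A f) ≤ sInf (A e)} ⊆
            M.closure (M.E \ Rs) := by
          intro f hf
          by_cases hfRs : f ∈ Rs
          · by_contra hfcl
            have h2 := hemin f ⟨hfRs, hfcl⟩
            have h3 := hunc e heE heRs.2.1
            have h4 := hf.2.2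
            linarith
          · exact M.subset_closure _ hsub ⟨hf.1, hfRs⟩
        have h5 : e ∈ M.closure (M.closure (M.E \ Rs)) := M.closure_subset_closure hKsub h1
        rw [Matroid.closure_closure] at h5
        exact heP.2 h5
      refine ⟨subset_antisymm (M.closure_subset_ground _) ?_, hsub⟩
      intro x hx
      by_cases hxRs : x ∈ Rs
      · exact hkey x hxRs
      · exact M.subset_closure _ hsub ⟨hx, hxRs⟩
    -- Step 3 : the constrained family of bases
    have hBsRs : Bs ⊆ M.E \ Rs := fun e he => ⟨he.1, fun h => h.2.2 he.2.2⟩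
    obtain ⟨T1, hT1, hBsT1, hT1sub⟩ := UOBAux.exists_base_sandwich hBsIndep hSpan hBsRs
    set Fam := {T | M.IsBase T ∧ Bs ⊆ T ∧ ∀ x ∈ T, x ∉ Rs} with hFamdef
    have hT1Fam : T1 ∈ Fam := ⟨hT1, hBsT1, fun x hx => (hT1sub hx).2⟩
    have hFamfin : Fam.Finite := hE.finite_subsets.subset fun T hT => hT.1.subset_ground
    obtain ⟨T₀, hT₀Fam, hT₀min⟩ := Set.exists_min_image Fam (setWeight v) hFamfin ⟨T1, hT1Fam⟩
    obtain ⟨hT₀, hBsT₀, hT₀Rs⟩ := hT₀Fam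
    have hT₀E := hT₀.subset_ground
    have hT₀fin : T₀.Finite := hE.subset hT₀E
    have hvT₀ : ∀ f ∈ T₀, v f = sSup (A f) := by
      intro f hf
      by_cases hfBs : f ∈ Bs
      · simp [hvdef, hfBs]
      · have h1 := hcert f (hT₀E hf) hfBs (hT₀Rs f hf)
        simp [hvdef, hfBs, h1]
    have hvout : ∀ e, e ∉ Bs → v e = sInf (A e) := fun e he => by simp [hvdef, he]
    -- Step (a)
    have hstepA : ∀ e ∈ M.E, e ∉ T₀ → e ∉ Rs → e ∈ M.closure {f | f ∈ T₀ ∧ v f ≤ v e} := by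
      intro e heE heT₀ heRs
      by_contra h0
      have heBs : e ∉ Bs := fun h => heT₀ (hBsT₀ h)
      set D := {f | f ∈ T₀ ∧ (v f ≤ v e ∨ f ∈ Bs)} with hDdef
      have hDT₀ : D ⊆ T₀ := fun f hf => hf.1
      have heD : e ∉ M.closure D := by
        intro heD
        obtain ⟨S, hSD, heS, hSmin⟩ :=
          UOBAux.exists_minimal_closure_subset M (hT₀fin.subset hDT₀) heD
        have hSsub : S ⊆ {f | f ∈ T₀ ∧ v f ≤ v e} := by
          by_contra hnot
          set S' := {f | f ∈ S ∧ ¬ v f ≤ v e} with hS'def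
          have hS'ne : S'.Nonempty := by
            obtain ⟨f, hfS, hfbad⟩ := not_subset.mp hnot
            exact ⟨f, hfS, fun h => hfbad ⟨(hSD hfS).1, h⟩⟩
          have hS'fin : S'.Finite := (hT₀fin.subset (hSD.trans hDT₀)).subset fun f hf => hf.1
          obtain ⟨f, hfS', hfmax⟩ := Set.exists_max_image S' (fun g => sSup (A g)) hS'fin hS'ne
          have hfS : f ∈ S := hfS'.1
          have hfBs : f ∈ Bs := ((hSD hfS).2).resolve_left hfS'.2
          have hex : f ∈ M.closure (insert e (S \ {f})) := by
            have h1 : e ∈ M.closure (insert f (S \ {f})) := by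
              rwa [insert_diff_singleton, insert_eq_of_mem hfS]
            exact (Matroid.closure_exchange ⟨h1, hSmin f hfS⟩).1
          have hnotsub : ¬ insert e (S \ {f}) ⊆
              {g | g ∈ M.E ∧ g ≠ f ∧ sInf (A g) < sSup (A f)} := by
            intro hsub
            exact UOBAux.blue_not_mem_closure hE hA (hBsE hfBs) hfBs.2.2
              (M.closure_subset_closure hsub hex)
          obtain ⟨g, hgmem, hgbad⟩ := not_subset.mp hnotsub
          have hgE : g ∈ M.E := by
            rcases hgmem with rfl | hg
            · exact heE
            · exact hT₀E (hDT₀ (hSD hg.1))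
          have hgf : g ≠ f := by
            rcases hgmem with rfl | hg
            · exact fun h => heT₀ (h ▸ hDT₀ (hSD hfS))
            · exact hg.2
          have hLg : sSup (A f) ≤ sInf (A g) := by
            by_contra h
            exact hgbad ⟨hgE, hgf, not_le.mp h⟩
          have hvf : v f = sSup (A f) := by simp [hvdef, hfBs]
          have hvfe : v e < v f := not_le.mp hfS'.2
          have hgne : g ≠ e := by
            rintro rfl
            have h1 : v g = sInf (A g) := hvout g heBs
            linarith
          have hgS : g ∈ S := by
            rcases hgmem with rfl | hg
            · exact absurd rfl hgne
            · exact hg.1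
          have hgBs : g ∈ Bs := by
            rcases (hSD hgS).2 with h | h
            · exfalso
              have h2 : v g = sSup (A g) := hvT₀ g (hDT₀ (hSD hgS))
              have h3 := hIS g hgE
              linarith
            · exact h
          have h4 := hunc g hgE hgBs.2.1
          have h5 : g ∈ S' := by
            refine ⟨hgS, ?_⟩
            have h2 : v g = sSup (A g) := by simp [hvdef, hgBs]
            intro h6
            rw [h2] at h6
            linarith
          have h7 := hfmax g h5
          linarith
        exact h0 (M.closure_subset_closure hSsub heS)
      have hDind : M.Indep D := hT₀.indep.subset hDT₀
      have heDm : e ∉ D := fun h => heT₀ (hDT₀ h)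
      have hXind : M.Indep (insert e D) := by
        rw [hDind.insert_indep_iff_of_notMem heDm]
        exact ⟨heE, heD⟩
      have hsp : M.Spanning (insert e T₀) :=
        hT₀.spanning.superset (subset_insert _ _) (insert_subset heE hT₀E)
      obtain ⟨J, hJ, hXJ, hJsub⟩ := UOBAux.exists_base_sandwich hXind hsp
        (insert_subset_insert hDT₀)
      obtain ⟨f, hfT₀, hfD, hJeq⟩ := UOBAux.base_exchange_shape hE hT₀ heT₀ hDT₀ hJ hXJ hJsub
      have hfv : v e < v f := not_le.mp fun h => hfD ⟨hfT₀, Or.inl h⟩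
      have hfBs : f ∉ Bs := fun h => hfD ⟨hfT₀, Or.inr h⟩
      have hJFam : J ∈ Fam := by
        refine ⟨hJ, ?_, ?_⟩
        · intro b hb
          rw [hJeq]
          exact mem_insert_of_mem _ ⟨hBsT₀ hb, fun h => hfBs (mem_singleton_iff.mp h ▸ hb)⟩
        · intro x hx hxRs
          rw [hJeq] at hx
          rcases hx with rfl | hx
          · exact heRs hxRs
          · exact hT₀Rs x hx.1 hxRs
      have h8 := hT₀min J hJFam
      rw [hJeq, UOBAux.setWeight_exchange heT₀ hfT₀ hT₀fin] at h8
      linarith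
    -- Step (b)
    have hstepB : ∀ e ∈ M.E, e ∉ T₀ → e ∈ M.closure {f | f ∈ T₀ ∧ v f ≤ v e} := by
      intro e heE heT₀
      by_cases heRs : e ∈ Rs
      swap
      · exact hstepA e heE heT₀ heRs
      by_contra h0
      set P := {x | x ∈ Rs ∧ x ∉ M.closure {f | f ∈ T₀ ∧ v f ≤ v x}} with hPdef
      have hPfin : P.Finite := (hE.subset hRsE).subset fun x hx => hx.1
      obtain ⟨x, hxP, hxmin⟩ := Set.exists_min_image P (fun g => sInf (A g)) hPfin
        ⟨e, heRs, h0⟩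
      obtain ⟨hxRs, hxcl⟩ := hxP
      have hxE := hRsE hxRs
      have hxT₀ : x ∉ T₀ := fun h => (hT₀Rs x h) hxRs
      have hxBs : x ∉ Bs := fun h => hxT₀ (hBsT₀ h)
      have hvx : v x = sInf (A x) := hvout x hxBs
      have h1 := UOBAux.red_mem_closure hE hA hxE (hRred x hxRs)
      have hKsub : {f | f ∈ M.E ∧ f ≠ x ∧ sSup (A f) ≤ sInf (A x)} ⊆
          M.closure {f | f ∈ T₀ ∧ v f ≤ v x} := by
        intro f hf
        by_cases hfT₀ : f ∈ T₀
        · refine M.subset_closure _ (fun g hg => hT₀E hg.1) ⟨hfT₀, ?_⟩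
          have h2 := hvT₀ f hfT₀
          rw [h2, hvx]
          exact hf.2.2
        · have hfBs : f ∉ Bs := fun h => hfT₀ (hBsT₀ h)
          have hvf : v f = sInf (A f) := hvout f hfBs
          have hvfx : v f ≤ v x := by
            rw [hvf, hvx]
            exact (hIS f hf.1).trans hf.2.2
          have hmono : M.closure {g | g ∈ T₀ ∧ v g ≤ v f} ⊆
              M.closure {g | g ∈ T₀ ∧ v g ≤ v x} :=
            M.closure_subset_closure fun g hg => ⟨hg.1, hg.2.trans hvfx⟩
          by_cases hfRs : f ∈ Rs
          · have hfP : f ∉ P := by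
              intro hfP
              have h3 := hxmin f hfP
              have h4 := hunc f hf.1 hfRs.2.1
              have h5 := hf.2.2
              linarith
            have h6 : f ∈ M.closure {g | g ∈ T₀ ∧ v g ≤ v f} := by
              by_contra h7
              exact hfP ⟨hfRs, h7⟩
            exact hmono h6
          · exact hmono (hstepA f hf.1 hfT₀ hfRs)
      have h8 : x ∈ M.closure (M.closure {f | f ∈ T₀ ∧ v f ≤ v x}) :=
        M.closure_subset_closure hKsub h1
      rw [Matroid.closure_closure] at h8
      exact hxcl h8
    -- Conclusion
    refine ⟨T₀, fun w hw => ⟨hT₀, ?_⟩⟩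
    have hloc : ∀ e ∈ M.E, e ∈ M.closure {f | f ∈ T₀ ∧ w f ≤ w e} := by
      intro e heE
      by_cases heT₀ : e ∈ T₀
      · exact M.subset_closure _ (fun g hg => hT₀E hg.1) ⟨heT₀, le_refl _⟩
      · have h1 := hstepB e heE heT₀
        refine M.closure_subset_closure ?_ h1
        intro f hf
        refine ⟨hf.1, ?_⟩
        have h2 := (UOBAux.realization_bounds hA hw (hT₀E hf.1)).2
        have h3 := (UOBAux.realization_bounds hA hw heE).1
        have h4 := hvT₀ f hf.1
        have h5 := hvout e (fun h => heT₀ (hBsT₀ h))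
        have h6 := hf.2
        rw [h4, h5] at h6
        linarith
    exact UOBAux.localopt_min hE hT₀ w hloc
end

section
/- Let (M, 𝒜) be an uncertainty matroid on a finite ground set E that admits a uniformly optimal basis. Let B be the set of blue uncertain elements and R the set of red uncertain elements, so that every element of E \ (B ∪ R) is certain, and let w^c assign to each certain element e the unique element of 𝒜(e). Then T ⊆ E is a uniformly optimal basis of (M, 𝒜) if and only if: (i) B ⊆ T; (ii) T ∩ R = ∅; and (iii) T \ B is a minimum-weight basis of the minor M / B \ R (contract B, delete R) with respect to w^c. -/
open Matroid

variable {α : Type*}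

/-- Deletion of a set of elements from a matroid. -/
def Matroid.del (M : Matroid α) (D : Set α) : Matroid α := M ↾ (M.E \ D)

/-- Contraction of a set of elements in a matroid, defined by duality. -/
def Matroid.con (M : Matroid α) (C : Set α) : Matroid α := (M✶.del C)✶


open Set
open scoped Classical

section AuxUOB

variable {α : Type*}

private lemma setWeight_congr' {w w' : α → ℝ} {S : Set α} (h : ∀ e ∈ S, w e = w' e) :
    setWeight w S = setWeight w' S := finsum_mem_congr rfl h

private lemma setWeight_union' {w : α → ℝ} {S T : Set α} (hd : Disjoint S T) (hS : S.Finite)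
    (hT : T.Finite) : setWeight w (S ∪ T) = setWeight w S + setWeight w T :=
  finsum_mem_union hd hS hT

private lemma setWeight_diff_singleton' {w : α → ℝ} {S : Set α} (hS : S.Finite) {e : α}
    (he : e ∈ S) : setWeight w S = w e + setWeight w (S \ {e}) := by
  conv_lhs => rw [← Set.insert_eq_of_mem he, ← Set.insert_diff_singleton]
  exact finsum_mem_insert w (fun h => h.2 rfl) hS.diff

private lemma exists_realization' {M : Matroid α} {A : α → Set ℝ} (hA : IsAreaFun M A) :
    ∃ w, Realization M A w := by
  refine ⟨fun e => if h : (A e).Nonempty then h.some else 0, fun e he => ?_⟩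
  show (if h : (A e).Nonempty then h.some else 0) ∈ A e
  rw [dif_pos (hA e he).1]
  exact (hA e he).1.some_mem

private lemma realization_update' {M : Matroid α} {A : α → Set ℝ} {w : α → ℝ}
    (hw : Realization M A w) {e : α} {a : ℝ} (ha : a ∈ A e) :
    Realization M A (Function.update w e a) := by
  intro x hx
  rcases eq_or_ne x e with rfl | h
  · rwa [Function.update_self]
  · rw [Function.update_of_ne h]; exact hw x hx

private lemma two_points' {A : α → Set ℝ} {e : α} (hne : (A e).Nonempty)
    (hnc : ¬ Certain A e) : ∃ lo hi, lo ∈ A e ∧ hi ∈ A e ∧ lo < hi := by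
  obtain ⟨a, ha⟩ := hne
  have : ∃ b ∈ A e, b ≠ a := by
    by_contra h
    push_neg at h
    exact hnc ⟨a, subset_antisymm h (by simpa using ha)⟩
  obtain ⟨b, hbA, hba⟩ := this
  rcases lt_or_gt_of_ne hba with h | h
  exacts [⟨b, a, hbA, ha, h⟩, ⟨a, b, ha, hbA, h⟩]

private lemma basis_iff_base_of_spanning' {M : Matroid α} {X I : Set α} (hX : M.Spanning X) :
    M.IsBasis I X ↔ I ⊆ X ∧ M.IsBase I := by
  constructor
  · intro h
    refine ⟨h.subset, h.indep.isBase_of_spanning ?_⟩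
    rw [spanning_iff_closure_eq h.indep.subset_ground, h.closure_eq_closure, hX.closure_eq]
  · rintro ⟨hIX, hI⟩
    exact Matroid.IsBase.isBasis_of_subset hX.subset_ground hI hIX

private lemma con_base_iff' {M : Matroid α} {B : Set α} (hB : M.Indep B) (S : Set α) :
    (M.con B).IsBase S ↔ S ⊆ M.E \ B ∧ M.IsBase (S ∪ B) := by
  have hBE : B ⊆ M.E := hB.subset_ground
  have hsp : M✶.Spanning (M.E \ B) := by
    have h := hB.coindep.compl_spanning
    rwa [dual_ground] at h
  have hset : ∀ S : Set α, S ⊆ M.E \ B → M.E \ ((M.E \ B) \ S) = S ∪ B := by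
    intro S hS
    rw [diff_diff, diff_diff_cancel_left (union_subset hBE (hS.trans diff_subset)), union_comm]
  rw [Matroid.con, Matroid.del, dual_isBase_iff', dual_ground, restrict_ground_eq,
    isBase_restrict_iff (show M.E \ B ⊆ M✶.E by rw [dual_ground]; exact diff_subset),
    basis_iff_base_of_spanning' hsp]
  constructor
  · rintro ⟨⟨-, h1⟩, h2⟩
    rw [dual_isBase_iff (diff_subset.trans diff_subset), hset S h2] at h1
    exact ⟨h2, h1⟩
  · rintro ⟨h2, h1⟩
    refine ⟨⟨diff_subset, ?_⟩, h2⟩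
    rw [dual_isBase_iff (diff_subset.trans diff_subset), hset S h2]
    exact h1

private lemma conDel_base_iff' {M : Matroid α} {B R T₀ : Set α}
    (hT₀ : M.IsBase T₀) (hBT₀ : B ⊆ T₀) (hT₀R : Disjoint T₀ R) (S : Set α) :
    ((M.con B).del R).IsBase S ↔ S ⊆ (M.E \ B) \ R ∧ M.IsBase (S ∪ B) := by
  have hBind : M.Indep B := hT₀.indep.subset hBT₀
  have hNE : (M.con B).E = M.E \ B := by
    simp [Matroid.con, Matroid.del]
  have hT₀B : (M.con B).IsBase (T₀ \ B) := by
    rw [con_base_iff' hBind, diff_union_of_subset hBT₀]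
    exact ⟨diff_subset_diff_left hT₀.subset_ground, hT₀⟩
  have hT₀sub : T₀ \ B ⊆ (M.E \ B) \ R := by
    refine subset_diff.2 ⟨diff_subset_diff_left hT₀.subset_ground, ?_⟩
    exact (hT₀R.mono_left diff_subset)
  have hsp : (M.con B).Spanning ((M.E \ B) \ R) :=
    hT₀B.spanning.superset hT₀sub (by rw [hNE]; exact diff_subset)
  rw [Matroid.del, hNE, isBase_restrict_iff (by rw [hNE]; exact diff_subset),
    basis_iff_base_of_spanning' hsp, con_base_iff' hBind]
  exact ⟨fun ⟨h1, _, h2⟩ => ⟨h1, h2⟩, fun ⟨h1, h2⟩ => ⟨h1, h1.trans diff_subset, h2⟩⟩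

private lemma mem_of_blue' {M : Matroid α} {A : α → Set ℝ} {T : Set α} {e : α}
    (hE : M.E.Finite) (hA : IsAreaFun M A) (hT : IsUOB M A T)
    (he : e ∈ M.E) (hnc : ¬ Certain A e) (hb : Blue M A e) : e ∈ T := by
  by_contra heT
  obtain ⟨w0, hw0⟩ := exists_realization' hA
  obtain ⟨lo, hi, hloA, hhiA, hlt⟩ := two_points' (hA e he).1 hnc
  set w1 := Function.update w0 e lo with hw1def
  set w2 := Function.update w0 e hi with hw2def
  have hw1 : Realization M A w1 := realization_update' hw0 hloA
  have hw2 : Realization M A w2 := realization_update' hw0 hhiA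
  obtain ⟨T'', hT''min, heT''⟩ := hb w2 hw2
  have hT''fin : T''.Finite := hE.subset hT''min.1.subset_ground
  have h12T : setWeight w1 T = setWeight w2 T :=
    setWeight_congr' fun x hx => by
      have hxe : x ≠ e := fun h => heT (h ▸ hx)
      rw [hw1def, hw2def, Function.update_of_ne hxe, Function.update_of_ne hxe]
  have hc : setWeight w1 (T'' \ {e}) = setWeight w2 (T'' \ {e}) :=
    setWeight_congr' fun x hx => by
      have hxe : x ≠ e := fun h => hx.2 (by simp [h])
      rw [hw1def, hw2def, Function.update_of_ne hxe, Function.update_of_ne hxe]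
  have hs1 : setWeight w1 T'' = lo + setWeight w1 (T'' \ {e}) := by
    rw [setWeight_diff_singleton' hT''fin heT'', hw1def, Function.update_self]
  have hs2 : setWeight w2 T'' = hi + setWeight w2 (T'' \ {e}) := by
    rw [setWeight_diff_singleton' hT''fin heT'', hw2def, Function.update_self]
  have i1 : setWeight w1 T ≤ setWeight w1 T'' := (hT w1 hw1).2 _ hT''min.1
  have i2 : setWeight w2 T'' ≤ setWeight w2 T := hT''min.2 _ (hT w1 hw1).1
  linarith

private lemma not_mem_of_red' {M : Matroid α} {A : α → Set ℝ} {T : Set α} {e : α}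
    (hE : M.E.Finite) (hA : IsAreaFun M A) (hT : IsUOB M A T)
    (he : e ∈ M.E) (hnc : ¬ Certain A e) (hr : Red M A e) : e ∉ T := by
  intro heT
  obtain ⟨w0, hw0⟩ := exists_realization' hA
  obtain ⟨lo, hi, hloA, hhiA, hlt⟩ := two_points' (hA e he).1 hnc
  set w1 := Function.update w0 e lo with hw1def
  set w2 := Function.update w0 e hi with hw2def
  have hw1 : Realization M A w1 := realization_update' hw0 hloA
  have hw2 : Realization M A w2 := realization_update' hw0 hhiA
  obtain ⟨T'', hT''min, heT''⟩ := hr w1 hw1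
  have hTfin : T.Finite := hE.subset (hT w1 hw1).1.subset_ground
  have h12T'' : setWeight w1 T'' = setWeight w2 T'' :=
    setWeight_congr' fun x hx => by
      have hxe : x ≠ e := fun h => heT'' (h ▸ hx)
      rw [hw1def, hw2def, Function.update_of_ne hxe, Function.update_of_ne hxe]
  have hc : setWeight w1 (T \ {e}) = setWeight w2 (T \ {e}) :=
    setWeight_congr' fun x hx => by
      have hxe : x ≠ e := fun h => hx.2 (by simp [h])
      rw [hw1def, hw2def, Function.update_of_ne hxe, Function.update_of_ne hxe]
  have hs1 : setWeight w1 T = lo + setWeight w1 (T \ {e}) := by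
    rw [setWeight_diff_singleton' hTfin heT, hw1def, Function.update_self]
  have hs2 : setWeight w2 T = hi + setWeight w2 (T \ {e}) := by
    rw [setWeight_diff_singleton' hTfin heT, hw2def, Function.update_self]
  have i1 : setWeight w1 T'' ≤ setWeight w1 T := hT''min.2 _ (hT w2 hw2).1
  have i2 : setWeight w2 T ≤ setWeight w2 T'' := (hT w2 hw2).2 _ hT''min.1
  linarith

end AuxUOB

/-- Characterization of uniformly optimal bases: they contain all blue uncertain elements,
avoid all red uncertain elements, and their certain part is a minimum weight basis of
the certain weighted matroid `M / B \ R`. -/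
theorem uob_characterization (M : Matroid α) (A : α → Set ℝ)
    (hE : M.E.Finite) (hA : IsAreaFun M A)
    (hex : ∃ T, IsUOB M A T)
    (B R : Set α)
    (hB : B = {e ∈ M.E | ¬ Certain A e ∧ Blue M A e})
    (hR : R = {e ∈ M.E | ¬ Certain A e ∧ Red M A e})
    (hcert : ∀ e ∈ M.E, e ∉ B ∪ R → Certain A e)
    (wc : α → ℝ) (hwc : ∀ e ∈ M.E, Certain A e → A e = {wc e})
    (T : Set α) :
    IsUOB M A T ↔
      B ⊆ T ∧ T ∩ R = ∅ ∧ IsMinBasis ((M.con B).del R) wc (T \ B) := by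
  subst hB hR
  set Bs := {e ∈ M.E | ¬ Certain A e ∧ Blue M A e} with hBsdef
  set Rs := {e ∈ M.E | ¬ Certain A e ∧ Red M A e} with hRsdef
  obtain ⟨T₀, hT₀uob⟩ := hex
  obtain ⟨w0, hw0⟩ := exists_realization' hA
  have hBE : Bs ⊆ M.E := fun x hx => hx.1
  have hRE : Rs ⊆ M.E := fun x hx => hx.1
  have hT₀base : M.IsBase T₀ := (hT₀uob w0 hw0).1
  have hBsub : ∀ T', IsUOB M A T' → Bs ⊆ T' := fun T' hT' x hx =>
    mem_of_blue' hE hA hT' hx.1 hx.2.1 hx.2.2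
  have hRdisj : ∀ T', IsUOB M A T' → Disjoint T' Rs := fun T' hT' =>
    Set.disjoint_right.2 fun x hx => not_mem_of_red' hE hA hT' hx.1 hx.2.1 hx.2.2
  have hBT₀ : Bs ⊆ T₀ := hBsub T₀ hT₀uob
  have hT₀R : Disjoint T₀ Rs := hRdisj T₀ hT₀uob
  have hbase_iff : ∀ S, ((M.con Bs).del Rs).IsBase S ↔
      S ⊆ (M.E \ Bs) \ Rs ∧ M.IsBase (S ∪ Bs) :=
    conDel_base_iff' hT₀base hBT₀ hT₀R
  -- any realization agrees with wc on certain ground elements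
  have hcw : ∀ w, Realization M A w → ∀ x ∈ M.E, x ∉ Bs → x ∉ Rs → w x = wc x := by
    intro w hw x hxE hxB hxR
    have hc : Certain A x := hcert x hxE (fun h => ((Set.mem_union _ _ _).1 h).elim hxB hxR)
    have h1 : w x ∈ A x := hw x hxE
    rw [hwc x hxE hc] at h1
    exact h1
  have hBfin : Bs.Finite := hE.subset hBE
  constructor
  · intro hT
    have hTbase : M.IsBase T := (hT w0 hw0).1
    have hTE : T ⊆ M.E := hTbase.subset_ground
    have hBT : Bs ⊆ T := hBsub T hT
    have hTRdisj : Disjoint T Rs := hRdisj T hT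
    have hTR : T ∩ Rs = ∅ := Set.disjoint_iff_inter_eq_empty.1 hTRdisj
    have hTBsub : T \ Bs ⊆ (M.E \ Bs) \ Rs := by
      refine subset_diff.2 ⟨diff_subset_diff_left hTE, hTRdisj.mono_left diff_subset⟩
    refine ⟨hBT, hTR, (hbase_iff _).2 ⟨hTBsub, by rwa [diff_union_of_subset hBT]⟩, ?_⟩
    intro S hS
    rw [hbase_iff] at hS
    obtain ⟨hS1, hS2⟩ := hS
    have hSE : S ⊆ M.E := hS1.trans (diff_subset.trans diff_subset)
    have hSB : Disjoint S Bs := Set.disjoint_left.2 fun x hxS => (hS1 hxS).1.2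
    have hineq : setWeight w0 T ≤ setWeight w0 (S ∪ Bs) := (hT w0 hw0).2 _ hS2
    have hTsplit : setWeight w0 T = setWeight w0 (T \ Bs) + setWeight w0 Bs := by
      conv_lhs => rw [← diff_union_of_subset hBT]
      exact setWeight_union' disjoint_sdiff_left (hE.subset (diff_subset.trans hTE)) hBfin
    have hSsplit : setWeight w0 (S ∪ Bs) = setWeight w0 S + setWeight w0 Bs :=
      setWeight_union' hSB (hE.subset hSE) hBfin
    have hTw : setWeight w0 (T \ Bs) = setWeight wc (T \ Bs) :=
      setWeight_congr' fun x hx => hcw w0 hw0 x (hTE hx.1) hx.2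
        (fun hxR => (hTRdisj.ne_of_mem hx.1 hxR) rfl)
    have hSw : setWeight w0 S = setWeight wc S :=
      setWeight_congr' fun x hx => hcw w0 hw0 x (hSE hx) (hSB.ne_of_mem hx · rfl)
        ((hS1 hx).2 ·)
    linarith
  · rintro ⟨hBT, hTR, hTBbase, hTBmin⟩
    have hTRdisj : Disjoint T Rs := Set.disjoint_iff_inter_eq_empty.2 hTR
    obtain ⟨hTB1, hTB2⟩ := (hbase_iff _).1 hTBbase
    have hTbase : M.IsBase T := by rwa [diff_union_of_subset hBT] at hTB2
    have hTE : T ⊆ M.E := hTbase.subset_ground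
    intro w hw
    refine ⟨hTbase, ?_⟩
    intro S hS
    have h0 : setWeight w T₀ ≤ setWeight w S := (hT₀uob w hw).2 S hS
    have hT₀TB : ((M.con Bs).del Rs).IsBase (T₀ \ Bs) := by
      refine (hbase_iff _).2 ⟨?_, by rwa [diff_union_of_subset hBT₀]⟩
      exact subset_diff.2 ⟨diff_subset_diff_left hT₀base.subset_ground,
        hT₀R.mono_left diff_subset⟩
    have hmin : setWeight wc (T \ Bs) ≤ setWeight wc (T₀ \ Bs) := hTBmin _ hT₀TB
    have hTsplit : setWeight w T = setWeight w (T \ Bs) + setWeight w Bs := by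
      conv_lhs => rw [← diff_union_of_subset hBT]
      exact setWeight_union' disjoint_sdiff_left (hE.subset (diff_subset.trans hTE)) hBfin
    have hT₀split : setWeight w T₀ = setWeight w (T₀ \ Bs) + setWeight w Bs := by
      conv_lhs => rw [← diff_union_of_subset hBT₀]
      exact setWeight_union' disjoint_sdiff_left
        (hE.subset (diff_subset.trans hT₀base.subset_ground)) hBfin
    have hTw : setWeight w (T \ Bs) = setWeight wc (T \ Bs) :=
      setWeight_congr' fun x hx => hcw w hw x (hTE hx.1) hx.2
        (fun hxR => (hTRdisj.ne_of_mem hx.1 hxR) rfl)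
    have hT₀w : setWeight w (T₀ \ Bs) = setWeight wc (T₀ \ Bs) :=
      setWeight_congr' fun x hx => hcw w hw x (hT₀base.subset_ground hx.1) hx.2
        (fun hxR => (hT₀R.ne_of_mem hx.1 hxR) rfl)
    linarith
end

section
/- Let (M, 𝒜) be an uncertainty matroid on a finite ground set E such that for every e ∈ E, the area 𝒜(e) is an interval of reals (of any type: open, closed, half-open, or a singleton). Then the set S of all elements that are uncertain and uncolored is a feasible query, and S ⊆ F for every feasible query F; in particular S is the unique minimum-size feasible query. -/
open Matroid

variable {α : Type*}

/-- `B` is a revelation of `X` in `(M, A)`: on `X` each area is replaced by a singleton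
subset of itself, and outside `X` areas are unchanged. -/
def IsRevelation (M : Matroid α) (A : α → Set ℝ) (X : Set α) (B : α → Set ℝ) : Prop :=
  (∀ e ∈ X, ∃ r ∈ A e, B e = {r}) ∧ ∀ e ∉ X, B e = A e

/-- `F ⊆ E` is a feasible query if every revelation of `F` admits a uniformly optimal basis. -/
def FeasibleQuery (M : Matroid α) (A : α → Set ℝ) (F : Set α) : Prop :=
  F ⊆ M.E ∧ ∀ B, IsRevelation M A F B → ∃ T, IsUOB M B T

open Set

section Aux

variable {M : Matroid α} {A : α → Set ℝ} {w : α → ℝ} {S T B : Set α} {e f x y : α}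

lemma setWeight_insert (w : α → ℝ) (hS : S.Finite) (hy : y ∉ S) :
    setWeight w (insert y S) = w y + setWeight w S :=
  finsum_mem_insert' w hy (hS.inter_of_left _)

lemma setWeight_exchange (w : α → ℝ) (hT : T.Finite) (hx : x ∈ T) (hy : y ∉ T) :
    setWeight w (insert y (T \ {x})) = setWeight w T - w x + w y := by
  have h1 : setWeight w T = w x + setWeight w (T \ {x}) := by
    nth_rewrite 1 [show T = insert x (T \ {x}) by
      rw [insert_diff_singleton, insert_eq_of_mem hx]]
    exact setWeight_insert w (hT.diff) (fun h => h.2 rfl)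
  have h2 : setWeight w (insert y (T \ {x})) = w y + setWeight w (T \ {x}) :=
    setWeight_insert w (hT.diff) (fun h => hy h.1)
  linarith

lemma IsMinBasis.exchange_le (hE : M.E.Finite) (hT : IsMinBasis M w T) (hx : x ∈ T)
    (hy : y ∉ T) (hB : M.IsBase (insert y (T \ {x}))) : w x ≤ w y := by
  have hTfin : T.Finite := hE.subset hT.1.subset_ground
  have h := hT.2 _ hB
  rw [setWeight_exchange w hTfin hx hy] at h
  linarith

/-- Fundamental "cocircuit" lemma : an element outside a base is spanned by the
elements it can be exchanged for. -/
lemma base_mem_closure_exchange (hE : M.E.Finite) (hT : M.IsBase T) (he : e ∈ M.E)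
    (heT : e ∉ T) : e ∈ M.closure {f ∈ T | M.IsBase (insert e (T \ {f}))} := by
  classical
  have hTfin : T.Finite := hE.subset hT.subset_ground
  have heclT : e ∈ M.closure T := by rw [hT.closure_eq]; exact he
  -- choose a minimal subset of T spanning e
  have hfin : {T' | T' ⊆ T ∧ e ∈ M.closure T'}.Finite :=
    hTfin.finite_subsets.subset (fun T' hT' => hT'.1)
  obtain ⟨T', hT'mem, hT'min⟩ :=
    Set.exists_min_image _ Set.ncard hfin ⟨T, Subset.rfl, heclT⟩
  obtain ⟨hT'sub, hT'cl⟩ := hT'mem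
  have hT'fin : T'.Finite := hTfin.subset hT'sub
  have hkey : ∀ f ∈ T', M.IsBase (insert e (T \ {f})) := by
    intro f hf
    have hfT : f ∈ T := hT'sub hf
    have hnot : e ∉ M.closure (T' \ {f}) := by
      intro hcon
      have hlt : (T' \ {f}).ncard < T'.ncard := ncard_diff_singleton_lt_of_mem hf hT'fin
      have := hT'min (T' \ {f}) ⟨(diff_subset).trans hT'sub, hcon⟩
      omega
    have hecl : e ∉ M.closure (T \ {f}) := by
      intro hecl
      have h1 : e ∈ M.closure (insert f (T' \ {f})) := by
        rwa [insert_diff_singleton, insert_eq_of_mem hf]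
      have h2 := Matroid.closure_exchange ⟨h1, hnot⟩
      have h3 : f ∈ M.closure (insert e (T \ {f})) :=
        M.closure_subset_closure (insert_subset_insert (diff_subset_diff_left hT'sub)) h2.1
      rw [Matroid.closure_insert_eq_of_mem_closure hecl] at h3
      exact hT.indep.notMem_closure_diff_of_mem hfT h3
    have hind : M.Indep (insert e (T \ {f})) := by
      rw [(hT.indep.subset (diff_subset (t := {f}))).insert_indep_iff_of_notMem
        (fun h => heT h.1)]
      exact ⟨he, hecl⟩
    have hef : e ≠ f := fun h => heT (h ▸ hfT)
    rw [insert_diff_singleton_comm hef] at hind ⊢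
    exact hT.exchange_isBase_of_indep' hfT heT hind
  exact M.closure_subset_closure (fun g hg => mem_sep_iff.2 ⟨hT'sub hg, hkey g hg⟩) hT'cl

/-- Symmetric exchange, derived from the fundamental lemma. -/
lemma exists_symm_exchange (hE : M.E.Finite) (hT : M.IsBase T) (hB : M.IsBase B)
    (hf : f ∈ B \ T) :
    ∃ e ∈ T \ B, M.IsBase (insert f (T \ {e})) ∧ M.IsBase (insert e (B \ {f})) := by
  have hfE : f ∈ M.E := hB.subset_ground hf.1
  have hD := base_mem_closure_exchange hE hT hfE hf.2
  have hf2 : f ∉ M.closure (B \ {f}) := hB.indep.notMem_closure_diff_of_mem hf.1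
  obtain ⟨e, heD, hecl⟩ :
      ∃ e ∈ {g ∈ T | M.IsBase (insert f (T \ {g}))}, e ∉ M.closure (B \ {f}) := by
    by_contra hcon; push_neg at hcon
    exact hf2 (M.closure_subset_closure_of_subset_closure hcon hD)
  have heT : e ∈ T := heD.1
  have hef : e ≠ f := fun h => hf.2 (h ▸ heT)
  have heB : e ∉ B := by
    intro h
    exact hecl (M.subset_closure (B \ {f}) ((diff_subset).trans hB.subset_ground) ⟨h, hef⟩)
  have hind : M.Indep (insert e (B \ {f})) := by
    rw [(hB.indep.subset (diff_subset (t := {f}))).insert_indep_iff_of_notMem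
      (fun h => heB h.1)]
    exact ⟨hT.subset_ground heT, hecl⟩
  rw [insert_diff_singleton_comm hef] at hind
  have hbase := hB.exchange_isBase_of_indep' hf.1 heB hind
  rw [← insert_diff_singleton_comm hef] at hbase
  exact ⟨e, ⟨heT, heB⟩, heD.2, hbase⟩

/-- Local optimality implies global optimality. -/
lemma isMinBasis_of_local (hE : M.E.Finite) (hT : M.IsBase T)
    (h : ∀ x ∈ T, ∀ y ∈ M.E, y ∉ T → M.IsBase (insert y (T \ {x})) → w x ≤ w y) :
    IsMinBasis M w T := by
  refine ⟨hT, ?_⟩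
  have key : ∀ n B, M.IsBase B → (B \ T).ncard = n → setWeight w T ≤ setWeight w B := by
    intro n
    induction n using Nat.strong_induction_on with
    | _ n IH =>
      intro B hB hcard
      have hBfin : B.Finite := hE.subset hB.subset_ground
      rcases eq_or_ne n 0 with rfl | hn
      · have h0 : B \ T = ∅ := (ncard_eq_zero (hBfin.diff)).1 hcard
        rw [hB.eq_of_subset_isBase hT (diff_eq_empty.1 h0)]
      · obtain ⟨f, hf⟩ : (B \ T).Nonempty := nonempty_of_ncard_ne_zero (hcard ▸ hn)
        obtain ⟨e, heTB, hTe, hBe⟩ := exists_symm_exchange hE hT hB hf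
        have hwef : w e ≤ w f := h e heTB.1 f (hB.subset_ground hf.1) hf.2 hTe
        have hsub : (insert e (B \ {f})) \ T = (B \ T) \ {f} := by
          rw [insert_diff_of_mem _ heTB.1, diff_diff_comm]
        have hcard' : ((insert e (B \ {f})) \ T).ncard = n - 1 := by
          rw [hsub, ncard_diff_singleton_of_mem hf, hcard]
        have hle := IH (n - 1) (by omega) _ hBe hcard'
        have hsw : setWeight w (insert e (B \ {f})) = setWeight w B - w f + w e :=
          setWeight_exchange w hBfin hf.1 heTB.2
        linarith
  intro B hB
  exact key _ B hB rfl

lemma exists_isMinBasis (M : Matroid α) (hE : M.E.Finite) (w : α → ℝ) :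
    ∃ T, IsMinBasis M w T := by
  have hfin : {B | M.IsBase B}.Finite :=
    hE.finite_subsets.subset (fun B hB => hB.subset_ground)
  obtain ⟨B0, hB0⟩ := M.exists_isBase
  obtain ⟨T, hT, hmin⟩ := Set.exists_min_image _ (setWeight w) hfin ⟨B0, hB0⟩
  exact ⟨T, hT, hmin⟩

end Aux


section Aux2

variable {M : Matroid α} {A : α → Set ℝ} {w : α → ℝ} {S T B : Set α} {e f x y : α}

lemma minBasis_mem_iff (hE : M.E.Finite) (he : e ∈ M.E) (w : α → ℝ) :
    (∃ T, IsMinBasis M w T ∧ e ∈ T) ↔ e ∉ M.closure {f ∈ M.E | w f < w e} := by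
  constructor
  · rintro ⟨T, hT, heT⟩ hecl
    have hTfin : T.Finite := hE.subset hT.1.subset_ground
    have h1 : e ∉ M.closure (T \ {e}) := hT.1.indep.notMem_closure_diff_of_mem heT
    obtain ⟨f, hfX, hfcl⟩ :
        ∃ f ∈ {f ∈ M.E | w f < w e}, f ∉ M.closure (T \ {e}) := by
      by_contra hcon; push_neg at hcon
      exact h1 (M.closure_subset_closure_of_subset_closure hcon hecl)
    have hfe : f ≠ e := fun h => absurd hfX.2 (h ▸ lt_irrefl _)
    have hfT : f ∉ T := fun h =>
      hfcl (M.subset_closure (T \ {e}) ((diff_subset (t := {e})).trans hT.1.subset_ground)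
        ⟨h, hfe⟩)
    have hind : M.Indep (insert f (T \ {e})) := by
      rw [(hT.1.indep.subset (diff_subset (t := {e}))).insert_indep_iff_of_notMem
        (fun h => hfT h.1)]
      exact ⟨hfX.1, hfcl⟩
    rw [insert_diff_singleton_comm hfe] at hind
    have hbase := hT.1.exchange_isBase_of_indep' heT hfT hind
    rw [← insert_diff_singleton_comm hfe] at hbase
    have := hT.2 _ hbase
    rw [setWeight_exchange w hTfin heT hfT] at this
    have := hfX.2
    linarith
  · intro hecl
    obtain ⟨T, hT⟩ := exists_isMinBasis M hE w
    by_cases heT : e ∈ T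
    · exact ⟨T, hT, heT⟩
    have hD := base_mem_closure_exchange hE hT.1 he heT
    obtain ⟨f, hfD, hwf⟩ :
        ∃ f ∈ {f ∈ T | M.IsBase (insert e (T \ {f}))}, ¬ w f < w e := by
      by_contra hcon; push_neg at hcon
      refine hecl (M.closure_subset_closure ?_ hD)
      exact fun g hg => mem_sep_iff.2 ⟨hT.1.subset_ground hg.1, hcon g hg⟩
    refine ⟨insert e (T \ {f}), ⟨hfD.2, ?_⟩, mem_insert _ _⟩
    intro B hB
    have hsw := setWeight_exchange w (hE.subset hT.1.subset_ground) hfD.1 heT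
    have h2 := hT.2 B hB
    rw [not_lt] at hwf
    linarith

lemma minBasis_not_mem_iff (hE : M.E.Finite) (he : e ∈ M.E) (w : α → ℝ) :
    (∃ T, IsMinBasis M w T ∧ e ∉ T) ↔
      e ∈ M.closure {f ∈ M.E | f ≠ e ∧ w f ≤ w e} := by
  constructor
  · rintro ⟨T, hT, heT⟩
    have hD := base_mem_closure_exchange hE hT.1 he heT
    refine M.closure_subset_closure ?_ hD
    rintro f hf
    obtain ⟨hfT, hfB⟩ := hf
    have hfe : f ≠ e := fun h => heT (h ▸ hfT)
    have hle := hT.2 _ hfB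
    rw [setWeight_exchange w (hE.subset hT.1.subset_ground) hfT heT] at hle
    exact mem_sep_iff.2 ⟨hT.1.subset_ground hfT, hfe, by linarith⟩
  · intro hecl
    obtain ⟨T, hT⟩ := exists_isMinBasis M hE w
    by_cases heT : e ∈ T
    swap
    · exact ⟨T, hT, heT⟩
    have h1 : e ∉ M.closure (T \ {e}) := hT.1.indep.notMem_closure_diff_of_mem heT
    obtain ⟨f, hfY, hfcl⟩ :
        ∃ f ∈ {f ∈ M.E | f ≠ e ∧ w f ≤ w e}, f ∉ M.closure (T \ {e}) := by
      by_contra hcon; push_neg at hcon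
      exact h1 (M.closure_subset_closure_of_subset_closure hcon hecl)
    have hfe : f ≠ e := hfY.2.1
    have hfT : f ∉ T := fun h =>
      hfcl (M.subset_closure (T \ {e}) ((diff_subset (t := {e})).trans hT.1.subset_ground)
        ⟨h, hfe⟩)
    have hind : M.Indep (insert f (T \ {e})) := by
      rw [(hT.1.indep.subset (diff_subset (t := {e}))).insert_indep_iff_of_notMem
        (fun h => hfT h.1)]
      exact ⟨hfY.1, hfcl⟩
    rw [insert_diff_singleton_comm hfe] at hind
    have hbase := hT.1.exchange_isBase_of_indep' heT hfT hind
    rw [← insert_diff_singleton_comm hfe] at hbase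
    refine ⟨insert f (T \ {e}), ⟨hbase, ?_⟩, ?_⟩
    · intro B hB
      have hsw := setWeight_exchange w (hE.subset hT.1.subset_ground) heT hfT
      have h2 := hT.2 B hB
      have := hfY.2.2
      linarith
    · rintro (h | h)
      · exact hfe h.symm
      · exact h.2 rfl

end Aux2

section Aux3

variable {M : Matroid α} {A : α → Set ℝ} {w : α → ℝ} {S T B : Set α} {e f g x y : α}

/-- `lo A e` is the infimum of the area of `e`. -/
noncomputable def lo (A : α → Set ℝ) (e : α) : ℝ := sInf (A e)

/-- `hi A e` is the supremum of the area of `e`. -/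
noncomputable def hi (A : α → Set ℝ) (e : α) : ℝ := sSup (A e)

/-- Elements that can possibly be strictly cheaper than `e`. -/
def Xset (M : Matroid α) (A : α → Set ℝ) (e : α) : Set α :=
  {f ∈ M.E | f ≠ e ∧ lo A f < hi A e}

/-- Elements that are always at most as expensive as `e`. -/
def Yset (M : Matroid α) (A : α → Set ℝ) (e : α) : Set α :=
  {f ∈ M.E | f ≠ e ∧ hi A f ≤ lo A e}

lemma lo_le (hA : IsAreaFun M A) (he : e ∈ M.E) {a : ℝ} (ha : a ∈ A e) : lo A e ≤ a :=
  csInf_le (hA e he).2.1 ha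

lemma le_hi (hA : IsAreaFun M A) (he : e ∈ M.E) {a : ℝ} (ha : a ∈ A e) : a ≤ hi A e :=
  le_csSup (hA e he).2.2 ha

lemma lo_le_hi (hA : IsAreaFun M A) (he : e ∈ M.E) : lo A e ≤ hi A e :=
  (lo_le hA he (hA e he).1.some_mem).trans (le_hi hA he (hA e he).1.some_mem)

open scoped Classical in
noncomputable def pick (A : α → Set ℝ) (g : α) : ℝ :=
  if h : (A g).Nonempty then h.some else 0

lemma pick_mem (h : (A g).Nonempty) : pick A g ∈ A g := by
  rw [pick, dif_pos h]
  exact h.some_mem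

lemma realization_pick (hA : IsAreaFun M A) : Realization M A (pick A) :=
  fun g hg => pick_mem (hA g hg).1

/-- A realization putting everything in `Xset M A e` strictly below `e`. -/
lemma exists_realization_X (hE : M.E.Finite) (hA : IsAreaFun M A) (he : e ∈ M.E) :
    ∃ w, Realization M A w ∧ ∀ f ∈ Xset M A e, w f < w e := by
  classical
  by_cases hne : (Xset M A e).Nonempty
  · obtain ⟨f0, hf0, hmax⟩ := Set.exists_max_image _ (lo A)
      (hE.subset (fun f hf => hf.1)) hne
    obtain ⟨a, haA, ha⟩ := exists_lt_of_lt_csSup (hA e he).1 hf0.2.2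
    refine ⟨fun g => if g = e then a
      else if h : ∃ b ∈ A g, b < a then h.choose else pick A g, ?_, ?_⟩
    · intro g hg
      by_cases hge : g = e
      · subst hge; simpa using haA
      · simp only [if_neg hge]
        split_ifs with h
        · exact h.choose_spec.1
        · exact pick_mem (hA g hg).1
    · intro f hf
      have hfe : f ≠ e := hf.2.1
      have hex : ∃ b ∈ A f, b < a :=
        exists_lt_of_csInf_lt (hA f hf.1).1 (lt_of_le_of_lt (hmax f hf) ha)
      simp only [if_neg hfe, if_pos rfl, dif_pos hex]
      exact hex.choose_spec.2
  · exact ⟨pick A, realization_pick hA, fun f hf => absurd ⟨f, hf⟩ hne⟩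

/-- A realization under which everything weakly below `e` lies in `Yset M A e`. -/
lemma exists_realization_Y (hE : M.E.Finite) (hA : IsAreaFun M A) (he : e ∈ M.E) :
    ∃ w, Realization M A w ∧
      ∀ f ∈ M.E, f ≠ e → f ∉ Yset M A e → w e < w f := by
  classical
  set Z : Set α := {f ∈ M.E | f ≠ e ∧ lo A e < hi A f} with hZ
  by_cases hne : Z.Nonempty
  · obtain ⟨f0, hf0, hmin⟩ := Set.exists_min_image _ (hi A)
      (hE.subset (fun f hf => hf.1)) hne
    obtain ⟨b, hbA, hb⟩ := exists_lt_of_csInf_lt (hA e he).1 hf0.2.2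
    refine ⟨fun g => if g = e then b
      else if h : ∃ c ∈ A g, b < c then h.choose else pick A g, ?_, ?_⟩
    · intro g hg
      by_cases hge : g = e
      · subst hge; simpa using hbA
      · simp only [if_neg hge]
        split_ifs with h
        · exact h.choose_spec.1
        · exact pick_mem (hA g hg).1
    · intro f hfE hfe hfY
      have hfZ : f ∈ Z := by
        refine ⟨hfE, hfe, ?_⟩
        by_contra hcon
        exact hfY ⟨hfE, hfe, not_lt.1 hcon⟩
      have hex : ∃ c ∈ A f, b < c :=
        exists_lt_of_lt_csSup (hA f hfE).1 (lt_of_lt_of_le hb (hmin f hfZ))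
      simp only [if_neg hfe, if_pos rfl, dif_pos hex]
      exact hex.choose_spec.2
  · refine ⟨pick A, realization_pick hA, fun f hfE hfe hfY => ?_⟩
    exact absurd ⟨f, hfE, hfe, by
      by_contra hcon
      exact hfY ⟨hfE, hfe, not_lt.1 hcon⟩⟩ hne

lemma blue_iff (hE : M.E.Finite) (hA : IsAreaFun M A) (he : e ∈ M.E) :
    Blue M A e ↔ e ∉ M.closure (Xset M A e) := by
  constructor
  · intro hb
    obtain ⟨w, hw, hwX⟩ := exists_realization_X hE hA he
    have h := (minBasis_mem_iff hE he w).1 (hb w hw)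
    intro hecl
    refine h (M.closure_subset_closure ?_ hecl)
    exact fun f hf => mem_sep_iff.2 ⟨hf.1, hwX f hf⟩
  · intro hecl w hw
    refine (minBasis_mem_iff hE he w).2 (fun h => hecl (M.closure_subset_closure ?_ h))
    rintro f hf
    obtain ⟨hfE, hfw⟩ := hf
    have hfe : f ≠ e := fun h => by rw [h] at hfw; exact lt_irrefl _ hfw
    exact mem_sep_iff.2 ⟨hfE, hfe,
      lt_of_le_of_lt (lo_le hA hfE (hw f hfE))
        (lt_of_lt_of_le hfw (le_hi hA he (hw e he)))⟩

lemma red_iff (hE : M.E.Finite) (hA : IsAreaFun M A) (he : e ∈ M.E) :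
    Red M A e ↔ e ∈ M.closure (Yset M A e) := by
  constructor
  · intro hr
    obtain ⟨w, hw, hwY⟩ := exists_realization_Y hE hA he
    have h := (minBasis_not_mem_iff hE he w).1 (hr w hw)
    refine M.closure_subset_closure ?_ h
    rintro f hf
    obtain ⟨hfE, hfe, hfw⟩ := hf
    have : f ∈ Yset M A e := by
      by_contra hcon
      exact absurd hfw (not_le.2 (hwY f hfE hfe hcon))
    exact this
  · intro hecl w hw
    refine (minBasis_not_mem_iff hE he w).2 (M.closure_subset_closure ?_ hecl)
    rintro f hf
    obtain ⟨hfE, hfe, hfle⟩ := hf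
    exact mem_sep_iff.2 ⟨hfE, hfe,
      (le_hi hA hfE (hw f hfE)).trans (hfle.trans (lo_le hA he (hw e he)))⟩

end Aux3

section Aux4

variable {M : Matroid α} {A : α → Set ℝ} {w : α → ℝ} {S T B : Set α} {e f g x y : α}

lemma isUOB_of_pairs (hE : M.E.Finite) (hA : IsAreaFun M A) (hT : M.IsBase T)
    (h : ∀ x ∈ T, ∀ y ∈ M.E, y ∉ T → M.IsBase (insert y (T \ {x})) → hi A x ≤ lo A y) :
    IsUOB M A T := by
  intro w hw
  refine isMinBasis_of_local hE hT (fun x hx y hyE hyT hbase => ?_)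
  have h1 : w x ≤ hi A x := le_hi hA (hT.subset_ground hx) (hw x (hT.subset_ground hx))
  have h2 : lo A y ≤ w y := lo_le hA hyE (hw y hyE)
  have h3 := h x hx y hyE hyT hbase
  linarith

/-- The main construction: if every element of the ground set is certain or colored
(in the closure-characterized sense), a uniformly optimal basis exists. -/
lemma exists_good_base (hE : M.E.Finite) (hA : IsAreaFun M A)
    (hcol : ∀ y ∈ M.E,
      lo A y = hi A y ∨ y ∉ M.closure (Xset M A y) ∨ y ∈ M.closure (Yset M A y)) :
    ∃ T, M.IsBase T ∧
      ∀ x ∈ T, ∀ y ∈ M.E, y ∉ T → M.IsBase (insert y (T \ {x})) → hi A x ≤ lo A y := by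
  classical
  have hBfin : {B | M.IsBase B}.Finite :=
    hE.finite_subsets.subset (fun B hB => hB.subset_ground)
  set S1 : Set (Set α) :=
    {B | M.IsBase B ∧ ∀ B', M.IsBase B' → setWeight (hi A) B ≤ setWeight (hi A) B'} with hS1
  have hS1fin : S1.Finite := hBfin.subset (fun B hB => hB.1)
  have hS1ne : S1.Nonempty := by
    obtain ⟨T, hT⟩ := exists_isMinBasis M hE (hi A)
    exact ⟨T, hT.1, hT.2⟩
  obtain ⟨T, hTS1, hTmin⟩ := Set.exists_min_image S1 (setWeight (lo A)) hS1fin hS1ne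
  have hTU : IsMinBasis M (hi A) T := ⟨hTS1.1, hTS1.2⟩
  have hTbase : M.IsBase T := hTS1.1
  have hTfin : T.Finite := hE.subset hTbase.subset_ground
  refine ⟨T, hTbase, ?_⟩
  intro x hx y hyE hyT hbase
  by_contra hbad
  rw [not_le] at hbad
  have hxy : hi A x ≤ hi A y := hTU.exchange_le hE hx hyT hbase
  have hyy : lo A y < hi A y := lt_of_lt_of_le hbad hxy
  rcases hcol y hyE with hcert | hblue | hred
  · exact absurd hcert (ne_of_lt hyy)
  · -- y is blue : find a heavy exchange partner in T and swap, decreasing lo-weight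
    have hD := base_mem_closure_exchange hE hTbase hyE hyT
    obtain ⟨g, hgD, hg2⟩ :
        ∃ g ∈ {f ∈ T | M.IsBase (insert y (T \ {f}))}, ¬ lo A g < hi A y := by
      by_contra hcon; push_neg at hcon
      refine hblue (M.closure_subset_closure ?_ hD)
      exact fun g hg => mem_sep_iff.2
        ⟨hTbase.subset_ground hg.1, fun h => hyT (h ▸ hg.1), hcon g hg⟩
    have hgT : g ∈ T := hgD.1
    have hgE : g ∈ M.E := hTbase.subset_ground hgT
    have hge : hi A g ≤ hi A y := hTU.exchange_le hE hgT hyT hgD.2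
    have hlg : lo A g ≤ hi A g := lo_le_hi hA hgE
    have heq1 : lo A g = hi A y := le_antisymm (hlg.trans hge) (not_lt.1 hg2)
    have heq2 : hi A g = hi A y := le_antisymm hge (heq1 ▸ hlg)
    have hU'' : setWeight (hi A) (insert y (T \ {g})) = setWeight (hi A) T := by
      rw [setWeight_exchange _ hTfin hgT hyT]
      linarith
    have hL'' : setWeight (lo A) (insert y (T \ {g})) < setWeight (lo A) T := by
      rw [setWeight_exchange _ hTfin hgT hyT]
      linarith
    have hS1'' : insert y (T \ {g}) ∈ S1 :=
      ⟨hgD.2, fun B' hB' => by rw [hU'']; exact hTS1.2 B' hB'⟩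
    exact absurd (hTmin _ hS1'') (not_le.2 hL'')
  · -- y is red : find a cheap substitute g for x, contradicting hi-minimality
    have hyn : y ∉ M.closure (T \ {x}) := by
      have hind := hbase.indep
      have h2 := hind.notMem_closure_diff_of_mem (mem_insert _ _)
      rwa [insert_diff_self_of_notMem (fun h => hyT h.1)] at h2
    obtain ⟨g, hgY, hgcl⟩ : ∃ g ∈ Yset M A y, g ∉ M.closure (T \ {x}) := by
      by_contra hcon; push_neg at hcon
      exact hyn (M.closure_subset_closure_of_subset_closure hcon hred)
    have hgx : g ≠ x := by
      rintro rfl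
      exact absurd hgY.2.2 (not_le.2 hbad)
    have hgT : g ∉ T := by
      intro h
      exact hgcl (M.subset_closure (T \ {x})
        ((diff_subset (t := {x})).trans hTbase.subset_ground) ⟨h, hgx⟩)
    have hind : M.Indep (insert g (T \ {x})) := by
      rw [(hTbase.indep.subset (diff_subset (t := {x}))).insert_indep_iff_of_notMem
        (fun h => hgT h.1)]
      exact ⟨hgY.1, hgcl⟩
    rw [insert_diff_singleton_comm hgx] at hind
    have hbase2 := hTbase.exchange_isBase_of_indep' hx hgT hind
    rw [← insert_diff_singleton_comm hgx] at hbase2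
    have hxg : hi A x ≤ hi A g := hTU.exchange_le hE hx hgT hbase2
    have : hi A g ≤ lo A y := hgY.2.2
    linarith

end Aux4

/-- With interval areas, the set of uncertain uncolored elements is the unique
minimum-size feasible query. -/
theorem interval_unique_min_feasible (M : Matroid α) (A : α → Set ℝ)
    (hE : M.E.Finite) (hA : IsAreaFun M A)
    (hint : ∀ e ∈ M.E, (A e).OrdConnected)
    (S : Set α) (hS : S = {e ∈ M.E | ¬ Certain A e ∧ ¬ Colored M A e}) :
    FeasibleQuery M A S ∧ (∀ F, FeasibleQuery M A F → S ⊆ F) ∧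
      (∀ F, FeasibleQuery M A F → F.ncard ≤ S.ncard → F = S) := by
  classical
  have hSE : S ⊆ M.E := by rw [hS]; exact fun e he => he.1
  -- Part B : every feasible query contains S
  have partB : ∀ F, FeasibleQuery M A F → S ⊆ F := by
    intro F hF e heS
    by_contra heF
    rw [hS] at heS
    obtain ⟨heE, hnc, hncol⟩ := heS
    have hnb : ¬ Blue M A e := fun h => hncol (Or.inl h)
    have hnr : ¬ Red M A e := fun h => hncol (Or.inr h)
    have hlth : lo A e < hi A e := by
      rcases lt_or_eq_of_le (lo_le_hi hA heE) with h | h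
      · exact h
      · exfalso
        refine hnc ⟨lo A e, eq_singleton_iff_nonempty_unique_mem.2 ⟨(hA e heE).1, ?_⟩⟩
        intro a ha
        exact le_antisymm (by rw [h]; exact le_hi hA heE ha) (lo_le hA heE ha)
    -- choose revelation values
    set r : α → ℝ := fun f =>
      if h : ∃ c ∈ A f, (f ∈ Xset M A e → c < hi A e) ∧ (f ∉ Yset M A e → lo A e < c)
      then h.choose else pick A f with hrdef
    have hrprop : ∀ f ∈ F, r f ∈ A f ∧ (f ∈ Xset M A e → r f < hi A e) ∧
        (f ∉ Yset M A e → lo A e < r f) := by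
      intro f hfF
      have hfE : f ∈ M.E := hF.1 hfF
      have hfe : f ≠ e := fun h => heF (h ▸ hfF)
      have hex : ∃ c ∈ A f,
          (f ∈ Xset M A e → c < hi A e) ∧ (f ∉ Yset M A e → lo A e < c) := by
        by_cases hfY : f ∈ Yset M A e
        · obtain ⟨a, ha⟩ := (hA f hfE).1
          exact ⟨a, ha, fun _ => lt_of_le_of_lt ((le_hi hA hfE ha).trans hfY.2.2) hlth,
            fun h => absurd hfY h⟩
        · have hhi : lo A e < hi A f := by
            by_contra hcon
            exact hfY ⟨hfE, hfe, not_lt.1 hcon⟩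
          obtain ⟨b, hbA, hb⟩ := exists_lt_of_lt_csSup (hA f hfE).1 hhi
          by_cases hfX : f ∈ Xset M A e
          · obtain ⟨a, haA, ha⟩ := exists_lt_of_csInf_lt (hA f hfE).1 hfX.2.2
            by_cases h1 : lo A e < a
            · exact ⟨a, haA, fun _ => ha, fun _ => h1⟩
            by_cases h2 : b < hi A e
            · exact ⟨b, hbA, fun _ => h2, fun _ => hb⟩
            push_neg at h1 h2
            refine ⟨(lo A e + hi A e) / 2, ?_, fun _ => add_div_two_lt_right.2 hlth,
              fun _ => left_lt_add_div_two.2 hlth⟩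
            exact (hint f hfE).out haA hbA
              ⟨h1.trans (le_of_lt (left_lt_add_div_two.2 hlth)),
                (le_of_lt (add_div_two_lt_right.2 hlth)).trans h2⟩
          · exact ⟨b, hbA, fun h => absurd h hfX, fun _ => hb⟩
      have hspec := hex.choose_spec
      rw [hrdef]
      simp only [dif_pos hex]
      exact ⟨hspec.1, hspec.2.1, hspec.2.2⟩
    set Bv : α → Set ℝ := fun g => if g ∈ F then ({r g} : Set ℝ) else A g with hBdef
    have hBmem : ∀ g ∈ F, Bv g = {r g} := fun g hg => by
      rw [hBdef]; simp only [if_pos hg]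
    have hBnot : ∀ g, g ∉ F → Bv g = A g := fun g hg => by
      rw [hBdef]; simp only [if_neg hg]
    have hrev : IsRevelation M A F Bv :=
      ⟨fun f hf => ⟨r f, (hrprop f hf).1, hBmem f hf⟩, hBnot⟩
    obtain ⟨T, hT⟩ := hF.2 Bv hrev
    have hABv : IsAreaFun M Bv := by
      intro g hg
      by_cases hgF : g ∈ F
      · rw [hBmem g hgF]
        exact ⟨singleton_nonempty _, bddBelow_singleton, bddAbove_singleton⟩
      · rw [hBnot g hgF]; exact hA g hg
    have hBe : Bv e = A e := hBnot e heF
    have hloBe : lo Bv e = lo A e := by rw [lo, lo, hBe]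
    have hhiBe : hi Bv e = hi A e := by rw [hi, hi, hBe]
    by_cases heT : e ∈ T
    · -- e is blue in the revealed instance, hence blue originally
      have hbB : Blue M Bv e := fun w hw => ⟨T, hT w hw, heT⟩
      have hnotX : e ∉ M.closure (Xset M Bv e) := (blue_iff hE hABv heE).1 hbB
      have hsub : Xset M A e ⊆ Xset M Bv e := by
        rintro f hf
        obtain ⟨hfE, hfe, hflt⟩ := hf
        refine mem_sep_iff.2 ⟨hfE, hfe, ?_⟩
        rw [hhiBe]
        by_cases hfF : f ∈ F
        · have : lo Bv f = r f := by rw [lo, hBmem f hfF, csInf_singleton]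
          rw [this]
          exact (hrprop f hfF).2.1 ⟨hfE, hfe, hflt⟩
        · have : lo Bv f = lo A f := by rw [lo, lo, hBnot f hfF]
          rw [this]; exact hflt
      exact hnb ((blue_iff hE hA heE).2
        (fun h => hnotX (M.closure_subset_closure hsub h)))
    · -- e is red in the revealed instance, hence red originally
      have hrB : Red M Bv e := fun w hw => ⟨T, hT w hw, heT⟩
      have hinY : e ∈ M.closure (Yset M Bv e) := (red_iff hE hABv heE).1 hrB
      have hsub : Yset M Bv e ⊆ Yset M A e := by
        rintro f hf
        obtain ⟨hfE, hfe, hfle⟩ := hf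
        rw [hloBe] at hfle
        refine mem_sep_iff.2 ⟨hfE, hfe, ?_⟩
        by_cases hfF : f ∈ F
        · have hfr : hi Bv f = r f := by rw [hi, hBmem f hfF, csSup_singleton]
          rw [hfr] at hfle
          by_contra hcon
          have h2 := (hrprop f hfF).2.2 (fun hY => hcon hY.2.2)
          linarith
        · have : hi Bv f = hi A f := by rw [hi, hi, hBnot f hfF]
          rwa [this] at hfle
      exact hnr ((red_iff hE hA heE).2
        (M.closure_subset_closure hsub hinY))
  refine ⟨⟨hSE, ?_⟩, partB, fun F hF hc =>
    (Set.eq_of_subset_of_ncard_le (partB F hF) hc (hE.subset hF.1)).symm⟩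
  -- Part A : S is a feasible query
  intro B hB
  have hAB : IsAreaFun M B := by
    intro g hg
    by_cases hgS : g ∈ S
    · obtain ⟨rr, hrA, hBr⟩ := hB.1 g hgS
      rw [hBr]
      exact ⟨singleton_nonempty _, bddBelow_singleton, bddAbove_singleton⟩
    · rw [hB.2 g hgS]; exact hA g hg
  have hreal : ∀ w, Realization M B w → Realization M A w := by
    intro w hw g hg
    by_cases hgS : g ∈ S
    · obtain ⟨rr, hrA, hBr⟩ := hB.1 g hgS
      have h2 := hw g hg
      rw [hBr, mem_singleton_iff] at h2
      rw [h2]; exact hrA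
    · have h2 := hw g hg
      rwa [hB.2 g hgS] at h2
  have hcol : ∀ y ∈ M.E, lo B y = hi B y ∨
      y ∉ M.closure (Xset M B y) ∨ y ∈ M.closure (Yset M B y) := by
    intro y hy
    by_cases hyS : y ∈ S
    · obtain ⟨rr, hrA, hBr⟩ := hB.1 y hyS
      left; rw [lo, hi, hBr, csInf_singleton, csSup_singleton]
    · have hBA : B y = A y := hB.2 y hyS
      have hcc : Certain A y ∨ Colored M A y := by
        by_contra hcon
        push_neg at hcon
        exact hyS (by rw [hS]; exact mem_sep_iff.2 ⟨hy, hcon.1, hcon.2⟩)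
      rcases hcc with ⟨rr, hr⟩ | hc
      · left; rw [lo, hi, hBA, hr, csInf_singleton, csSup_singleton]
      · rcases hc with hb | hr
        · exact Or.inr (Or.inl ((blue_iff hE hAB hy).1 (fun w hw => hb w (hreal w hw))))
        · exact Or.inr (Or.inr ((red_iff hE hAB hy).1 (fun w hw => hr w (hreal w hw))))
  obtain ⟨T, hTb, hTp⟩ := exists_good_base hE hAB hcol
  exact ⟨T, isUOB_of_pairs hE hAB hTb hTp⟩
end

section
/- Let (M, 𝒜) be an uncertainty matroid on a finite ground set E, let T₁ and T₂ be uniformly optimal bases of (M, 𝒜), and let e ∈ T₁ \ T₂. Then: (i) e is certain; and (ii) there exists f ∈ T₂ \ T₁ such that both T₁ − e + f and T₂ − f + e are uniformly optimal bases of (M, 𝒜). -/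
open Matroid

variable {α : Type*}

-- auxiliary lemmas
section Aux
open Set

lemma setWeight_insert_s4 (w : α → ℝ) {T : Set α} (hT : T.Finite) {f : α} (hf : f ∉ T) :
    setWeight w (insert f T) = w f + setWeight w T :=
  finsum_mem_insert w hf hT

lemma setWeight_diff (w : α → ℝ) {T : Set α} (hT : T.Finite) {e : α} (he : e ∈ T) :
    setWeight w T = w e + setWeight w (T \ {e}) := by
  have hT' : T = insert e (T \ {e}) := by
    rw [Set.insert_diff_singleton, Set.insert_eq_self.2 he]
  nth_rewrite 1 [hT']
  exact setWeight_insert_s4 w hT.diff (by simp)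

-- strong exchange
lemma strong_exchange {M : Matroid α} (hE : M.E.Finite) {B₁ B₂ : Set α}
    (hB₁ : M.IsBase B₁) (hB₂ : M.IsBase B₂) {e : α} (he : e ∈ B₁ \ B₂) :
    ∃ f ∈ B₂ \ B₁, M.IsBase (insert f (B₁ \ {e})) ∧ M.IsBase (insert e (B₂ \ {f})) := by
  have heE : e ∈ M.E := hB₁.subset_ground he.1
  have hecl : e ∈ M.closure B₂ := by rw [hB₂.closure_eq]; exact heE
  -- minimal J ⊆ B₂ with e ∈ closure J
  set S : Set (Set α) := {J | J ⊆ B₂ ∧ e ∈ M.closure J} with hSdef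
  have hSfin : S.Finite := (hE.subset hB₂.subset_ground).finite_subsets.subset fun J hJ => hJ.1
  have hSne : S.Nonempty := ⟨B₂, subset_rfl, hecl⟩
  obtain ⟨J, hJS, hJmin⟩ : ∃ J ∈ S, ∀ a' ∈ S, id a' ≤ id J → id J = id a' := by
    obtain ⟨J, hJS, hm⟩ := hSfin.exists_minimal hSne
    exact ⟨J, hJS, fun a' ha h => le_antisymm (hm ha h) h⟩
  simp only [id] at hJmin
  have hJB₂ : J ⊆ B₂ := hJS.1
  have hJcl : e ∈ M.closure J := hJS.2
  have hJkey : ∀ f ∈ J, e ∉ M.closure (B₂ \ {f}) := by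
    intro f hf hcon
    have hnot : e ∉ M.closure (J \ {f}) := by
      intro h
      have : J \ {f} ∈ S := ⟨(diff_subset).trans hJB₂, h⟩
      have := hJmin _ this diff_subset
      exact (this ▸ hf).2 rfl
    have hins : insert f (J \ {f}) = J := Set.insert_diff_singleton.trans (by simp [hf])
    have hex : f ∈ M.closure (insert e (J \ {f})) \ M.closure (J \ {f}) :=
      M.closure_exchange ⟨by rwa [hins], hnot⟩
    have h1 : f ∈ M.closure (insert e (B₂ \ {f})) :=
      M.closure_subset_closure (insert_subset_insert (diff_subset_diff_left hJB₂)) hex.1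
    rw [closure_insert_eq_of_mem_closure hcon] at h1
    exact hB₂.indep.notMem_closure_diff_of_mem (hJB₂ hf) h1
  have hex1 : ∃ f ∈ J, f ∉ M.closure (B₁ \ {e}) := by
    by_contra hcon
    push_neg at hcon
    have : M.closure J ⊆ M.closure (B₁ \ {e}) := by
      have := M.closure_subset_closure_of_subset_closure (Y := B₁ \ {e}) hcon
      simpa using this
    exact hB₁.indep.notMem_closure_diff_of_mem he.1 (this hJcl)
  obtain ⟨f, hfJ, hfcl⟩ := hex1
  have hfB₂ : f ∈ B₂ := hJB₂ hfJ
  have hfE : f ∈ M.E := hB₂.subset_ground hfB₂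
  have hfne : f ≠ e := by rintro rfl; exact he.2 hfB₂
  have hfB₁ : f ∉ B₁ := by
    intro h
    exact hfcl (M.subset_closure (B₁ \ {e}) ((diff_subset).trans hB₁.subset_ground) ⟨h, hfne⟩)
  refine ⟨f, ⟨hfB₂, hfB₁⟩, ?_, ?_⟩
  · have hind : M.Indep (insert f (B₁ \ {e})) := by
      rw [(hB₁.indep.diff {e}).insert_indep_iff_of_notMem (fun h => hfB₁ h.1)]
      exact ⟨hfE, hfcl⟩
    exact hB₁.exchange_isBase_of_indep hfB₁ hind
  · have hind : M.Indep (insert e (B₂ \ {f})) := by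
      rw [(hB₂.indep.diff {f}).insert_indep_iff_of_notMem (fun h => he.2 h.1)]
      exact ⟨heE, hJkey f hfJ⟩
    exact hB₂.exchange_isBase_of_indep he.2 hind

end Aux

/-- Strong basis exchange for uniformly optimal bases; exchanged elements are certain. -/
theorem uob_exchange (M : Matroid α) (A : α → Set ℝ)
    (hE : M.E.Finite) (hA : IsAreaFun M A)
    (T₁ T₂ : Set α) (h₁ : IsUOB M A T₁) (h₂ : IsUOB M A T₂)
    (e : α) (he : e ∈ T₁ \ T₂) :
    Certain A e ∧ ∃ f ∈ T₂ \ T₁,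
      IsUOB M A (insert f (T₁ \ {e})) ∧ IsUOB M A (insert e (T₂ \ {f})) := by
  classical
  obtain ⟨w₀, hw₀⟩ : ∃ w₀, Realization M A w₀ := by
    refine ⟨fun x => if h : (A x).Nonempty then h.some else 0, fun x hx => ?_⟩
    have h := (hA x hx).1
    simp only [h, dif_pos]
    exact h.some_mem
  have hT₁ : M.IsBase T₁ := (h₁ w₀ hw₀).1
  have hT₂ : M.IsBase T₂ := (h₂ w₀ hw₀).1
  have heE : e ∈ M.E := hT₁.subset_ground he.1
  obtain ⟨f, hf, hBa, hBb⟩ := strong_exchange hE hT₁ hT₂ he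
  have hfE : f ∈ M.E := hT₂.subset_ground hf.1
  have hfe : f ≠ e := fun h => he.2 (h ▸ hf.1)
  have hT₁fin : T₁.Finite := hE.subset hT₁.subset_ground
  have hT₂fin : T₂.Finite := hE.subset hT₂.subset_ground
  have hw1 : ∀ w : α → ℝ, setWeight w (insert f (T₁ \ {e})) = w f + setWeight w T₁ - w e := by
    intro w
    rw [setWeight_insert_s4 w hT₁fin.diff (fun h => hf.2 h.1),
        setWeight_diff w hT₁fin he.1]; ring
  have hw2 : ∀ w : α → ℝ, setWeight w (insert e (T₂ \ {f})) = w e + setWeight w T₂ - w f := by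
    intro w
    rw [setWeight_insert_s4 w hT₂fin.diff (fun h => he.2 h.1),
        setWeight_diff w hT₂fin hf.1]; ring
  have key : ∀ w, Realization M A w → w e = w f := by
    intro w hw
    have l1 := (h₁ w hw).2 _ hBa
    have l2 := (h₂ w hw).2 _ hBb
    rw [hw1 w] at l1; rw [hw2 w] at l2
    linarith
  constructor
  · refine ⟨w₀ f, (Set.eq_singleton_iff_nonempty_unique_mem).2 ⟨(hA e heE).1, ?_⟩⟩
    intro r hr
    have hw' : Realization M A (Function.update w₀ e r) := by
      intro x hx
      rcases eq_or_ne x e with rfl | hne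
      · simpa using hr
      · simpa [Function.update_of_ne hne] using hw₀ x hx
    have := key _ hw'
    simpa [Function.update_self, Function.update_of_ne hfe] using this
  · refine ⟨f, hf, ?_, ?_⟩
    · intro w hw
      refine ⟨hBa, fun B hB => ?_⟩
      rw [hw1 w, key w hw]
      simpa using (h₁ w hw).2 B hB
    · intro w hw
      refine ⟨hBb, fun B hB => ?_⟩
      rw [hw2 w, ← key w hw]
      simpa using (h₂ w hw).2 B hB
end

section
/- Let (M, 𝒜) be an uncertainty matroid on a finite ground set E that admits a uniformly optimal basis, and let e ∈ E be uncertain. Then e is blue if and only if e belongs to every uniformly optimal basis of (M, 𝒜), and e is red if and only if e belongs to no uniformly optimal basis of (M, 𝒜). -/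
open Matroid

variable {α : Type*}

lemma setWeight_update_not_mem [DecidableEq α] {w : α → ℝ} {e : α} {v : ℝ} {S : Set α} (he : e ∉ S) :
    setWeight (Function.update w e v) S = setWeight w S := by
  apply finsum_mem_congr rfl
  intro a ha
  exact Function.update_of_ne (ne_of_mem_of_not_mem ha he) _ _

lemma setWeight_update_mem [DecidableEq α] {w : α → ℝ} {e : α} {v : ℝ} {S : Set α} (hS : S.Finite)
    (he : e ∈ S) :
    setWeight (Function.update w e v) S = setWeight w S - w e + v := by
  classical
  rw [setWeight, setWeight, finsum_mem_eq_finite_toFinset_sum _ hS, finsum_mem_eq_finite_toFinset_sum _ hS]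
  have heF : e ∈ hS.toFinset := hS.mem_toFinset.2 he
  rw [Finset.sum_update_of_mem heF, ← Finset.sum_erase_add _ _ heF,
      ← Finset.sdiff_singleton_eq_erase]
  ring

/-- An uncertain element is blue iff it is in every uniformly optimal basis, and red iff
it is in no uniformly optimal basis. -/
theorem uncertain_blue_red_iff (M : Matroid α) (A : α → Set ℝ)
    (hE : M.E.Finite) (hA : IsAreaFun M A)
    (hex : ∃ T, IsUOB M A T) (e : α) (he : e ∈ M.E) (hu : ¬ Certain A e) :
    (Blue M A e ↔ ∀ T, IsUOB M A T → e ∈ T) ∧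
    (Red M A e ↔ ∀ T, IsUOB M A T → e ∉ T) := by
  classical
  obtain ⟨T₀, hT₀⟩ := hex
  -- two distinct values in A e
  obtain ⟨x, hx, y, hy, hxy⟩ : ∃ x ∈ A e, ∃ y ∈ A e, x < y := by
    obtain ⟨x, hx⟩ := (hA e he).1
    by_cases h : ∃ y ∈ A e, y ≠ x
    · obtain ⟨y, hy, hyx⟩ := h
      rcases lt_or_gt_of_ne hyx with h1 | h1
      · exact ⟨y, hy, x, hx, h1⟩
      · exact ⟨x, hx, y, hy, h1⟩
    · push_neg at h
      exact absurd ⟨x, Set.eq_singleton_iff_unique_mem.2 ⟨hx, h⟩⟩ hu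
  -- a base realization
  have hw₀ : ∃ w₀, Realization M A w₀ := by
    refine ⟨fun a => if h : a ∈ M.E then ((hA a h).1).choose else 0, fun a ha => ?_⟩
    simp only [dif_pos ha]
    exact ((hA a ha).1).choose_spec
  obtain ⟨w₀, hw₀⟩ := hw₀
  have hupd : ∀ v ∈ A e, ∀ w, Realization M A w → Realization M A (Function.update w e v) := by
    intro v hv w hw a ha
    rcases eq_or_ne a e with rfl | hne
    · simpa using hv
    · rw [Function.update_of_ne hne]; exact hw a ha
  have finB : ∀ B, M.IsBase B → B.Finite := fun B hB => hE.subset hB.subset_ground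
  constructor
  · constructor
    · intro hBlue T hT
      by_contra heT
      set w := Function.update w₀ e y with hwdef
      have hw : Realization M A w := hupd y hy w₀ hw₀
      obtain ⟨S, hS, heS⟩ := hBlue w hw
      set w' := Function.update w e x with hw'def
      have hw' : Realization M A w' := hupd x hx w hw
      have h1 : setWeight w S ≤ setWeight w T := hS.2 T (hT w hw).1
      have h2 : setWeight w' T ≤ setWeight w' S := (hT w' hw').2 S hS.1
      have h3 : setWeight w' S = setWeight w S - w e + x :=
        setWeight_update_mem (finB S hS.1) heS
      have h4 : setWeight w' T = setWeight w T := setWeight_update_not_mem heT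
      have h5 : w e = y := Function.update_self e y w₀
      rw [h3, h4, h5] at h2
      linarith
    · intro h w hw
      exact ⟨T₀, hT₀ w hw, h T₀ hT₀⟩
  · constructor
    · intro hRed T hT heT
      set w := Function.update w₀ e x with hwdef
      have hw : Realization M A w := hupd x hx w₀ hw₀
      obtain ⟨S, hS, heS⟩ := hRed w hw
      set w' := Function.update w e y with hw'def
      have hw' : Realization M A w' := hupd y hy w hw
      have h1 : setWeight w S ≤ setWeight w T := hS.2 T (hT w hw).1
      have h2 : setWeight w' T ≤ setWeight w' S := (hT w' hw').2 S hS.1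
      have h3 : setWeight w' T = setWeight w T - w e + y :=
        setWeight_update_mem (finB T (hT w hw).1) heT
      have h4 : setWeight w' S = setWeight w S := setWeight_update_not_mem heS
      have h5 : w e = x := Function.update_self e x w₀
      rw [h3, h4, h5] at h2
      linarith
    · intro h w hw
      exact ⟨T₀, hT₀ w hw, h T₀ hT₀⟩
end

section
/- Let (M, 𝒜) be an uncertainty matroid on a finite ground set E and let 𝒜 and ℬ be two uncertainty area functions on E such that inf 𝒜(e) = inf ℬ(e) and sup 𝒜(e) = sup ℬ(e) for every e ∈ E. Then an element e ∈ E is blue (resp. red) in (M, 𝒜) if and only if it is blue (resp. red) in (M, ℬ). In particular, (M, 𝒜) and (M, cl 𝒜) have the same blue and red elements, where cl 𝒜 assigns to each e the closed interval [L_e, U_e]. -/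
open Matroid

variable {α : Type*}

open scoped Classical

lemma setWeight_update_aux {T : Set α} (hT : T.Finite) (w : α → ℝ) (x : α) (s : ℝ) :
    setWeight (Function.update w x s) T
      = setWeight w (T \ {x}) + (if x ∈ T then s else 0) := by
  by_cases hx : x ∈ T
  · rw [if_pos hx]
    have hcoe : (hT.toFinset : Set α) = T := hT.coe_toFinset
    have h1 : setWeight (Function.update w x s) T
        = ∑ e ∈ hT.toFinset, Function.update w x s e := by
      rw [setWeight, ← finsum_mem_coe_finset, hcoe]
    have h2 : setWeight w (T \ {x}) = ∑ e ∈ hT.toFinset.erase x, w e := by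
      rw [setWeight, ← finsum_mem_coe_finset, Finset.coe_erase, hcoe]
    have hxF : x ∈ hT.toFinset := hT.mem_toFinset.2 hx
    rw [h1, h2, ← Finset.sum_erase_add _ _ hxF, Function.update_self]
    congr 1
    apply Finset.sum_congr rfl
    intro e he
    exact Function.update_of_ne (Finset.ne_of_mem_erase he) _ _
  · rw [if_neg hx, Set.diff_singleton_eq_self hx, add_zero]
    apply finsum_mem_congr rfl
    intro e he
    exact Function.update_of_ne (ne_of_mem_of_not_mem he hx) _ _

lemma wform_aux {M : Matroid α} (hE : M.E.Finite) (w : α → ℝ) (x : α)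
    {T : Set α} (hT : M.IsBase T) (u : ℝ) :
    setWeight (Function.update w x u) T
      = setWeight w (T \ {x}) + (if x ∈ T then u else 0) :=
  setWeight_update_aux (hE.subset hT.subset_ground) w x u

lemma convex_aux {M : Matroid α} (hE : M.E.Finite) (Q : Set α → Prop) (w : α → ℝ) (x : α)
    {s1 s2 s : ℝ} (hs1 : s1 ≤ s) (hs2 : s ≤ s2)
    (H1 : ∃ T, IsMinBasis M (Function.update w x s1) T ∧ Q T)
    (H2 : ∃ T, IsMinBasis M (Function.update w x s2) T ∧ Q T) :
    ∃ T, IsMinBasis M (Function.update w x s) T ∧ Q T := by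
  obtain ⟨T1, ⟨hT1, hm1⟩, hQ1⟩ := H1
  obtain ⟨T2, ⟨hT2, hm2⟩, hQ2⟩ := H2
  have m1 : ∀ B, M.IsBase B → setWeight w (T1 \ {x}) + (if x ∈ T1 then s1 else 0)
      ≤ setWeight w (B \ {x}) + (if x ∈ B then s1 else 0) := by
    intro B hB
    rw [← wform_aux hE w x hT1, ← wform_aux hE w x hB]; exact hm1 B hB
  have m2 : ∀ B, M.IsBase B → setWeight w (T2 \ {x}) + (if x ∈ T2 then s2 else 0)
      ≤ setWeight w (B \ {x}) + (if x ∈ B then s2 else 0) := by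
    intro B hB
    rw [← wform_aux hE w x hT2, ← wform_aux hE w x hB]; exact hm2 B hB
  by_cases hx1 : x ∈ T1
  · by_cases hx2 : x ∈ T2
    · refine ⟨T2, ⟨hT2, ?_⟩, hQ2⟩
      intro B hB
      rw [wform_aux hE w x hT2, wform_aux hE w x hB, if_pos hx2]
      have h2 := m2 B hB; rw [if_pos hx2] at h2
      by_cases hxB : x ∈ B
      · rw [if_pos hxB] at h2 ⊢; linarith
      · rw [if_neg hxB] at h2 ⊢; linarith
    · by_cases hcmp : setWeight w (T1 \ {x}) + s ≤ setWeight w (T2 \ {x})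
      · refine ⟨T1, ⟨hT1, ?_⟩, hQ1⟩
        intro B hB
        rw [wform_aux hE w x hT1, wform_aux hE w x hB, if_pos hx1]
        have h1 := m1 B hB; rw [if_pos hx1] at h1
        have h2 := m2 B hB; rw [if_neg hx2] at h2
        by_cases hxB : x ∈ B
        · rw [if_pos hxB] at h1 ⊢; linarith
        · rw [if_neg hxB] at h2 ⊢; linarith
      · push_neg at hcmp
        refine ⟨T2, ⟨hT2, ?_⟩, hQ2⟩
        intro B hB
        rw [wform_aux hE w x hT2, wform_aux hE w x hB, if_neg hx2]
        have h1 := m1 B hB; rw [if_pos hx1] at h1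
        have h2 := m2 B hB; rw [if_neg hx2] at h2
        by_cases hxB : x ∈ B
        · rw [if_pos hxB] at h1 ⊢; linarith
        · rw [if_neg hxB] at h2 ⊢; linarith
  · refine ⟨T1, ⟨hT1, ?_⟩, hQ1⟩
    intro B hB
    rw [wform_aux hE w x hT1, wform_aux hE w x hB, if_neg hx1]
    have h1 := m1 B hB; rw [if_neg hx1] at h1
    by_cases hxB : x ∈ B
    · rw [if_pos hxB] at h1 ⊢; linarith
    · rw [if_neg hxB] at h1 ⊢; linarith

lemma approx_aux {M : Matroid α} (hE : M.E.Finite) (Q : Set α → Prop) (w : α → ℝ) (x : α)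
    (t : ℝ)
    (H : ∀ n : ℕ, ∃ s : ℝ, |s - t| ≤ 1/(n+1) ∧
      ∃ T, IsMinBasis M (Function.update w x s) T ∧ Q T) :
    ∃ T, IsMinBasis M (Function.update w x t) T ∧ Q T := by
  choose s hs T hT hQ using H
  haveI : Finite ↥{b : Set α | b ⊆ M.E} := hE.finite_subsets.to_subtype
  let f : ℕ → ↥{b : Set α | b ⊆ M.E} := fun n => ⟨T n, (hT n).1.subset_ground⟩
  obtain ⟨y, hy0⟩ := Finite.exists_infinite_fiber f
  have hy : (f ⁻¹' {y}).Infinite := Set.infinite_coe_iff.1 hy0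
  obtain ⟨n0, hn0⟩ := hy.nonempty
  refine ⟨T n0, ⟨(hT n0).1, ?_⟩, hQ n0⟩
  intro B hB
  rw [wform_aux hE w x (hT n0).1, wform_aux hE w x hB]
  refine le_of_forall_pos_le_add ?_
  intro ε hε
  obtain ⟨m, hm⟩ := exists_nat_one_div_lt hε
  have hex : ∃ n ∈ f ⁻¹' {y}, m < n := by
    by_contra hcon
    push_neg at hcon
    exact hy (Set.Finite.subset (Set.finite_Iic m) (fun n hn => hcon n hn))
  obtain ⟨n, hnN, hmn⟩ := hex
  have hTn : T n = T n0 := by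
    have e1 : f n = y := hnN
    have e2 : f n0 = y := hn0
    have := e1.trans e2.symm
    exact congrArg Subtype.val this
  have hmin := (hT n).2 B hB
  rw [wform_aux hE w x (hT n).1, wform_aux hE w x hB, hTn] at hmin
  have habs := abs_le.1 (hs n)
  have h1n : 1/((n:ℝ)+1) ≤ 1/((m:ℝ)+1) := by
    apply one_div_le_one_div_of_le
    · positivity
    · linarith [(by exact_mod_cast hmn : (m:ℝ) < n)]
  by_cases hxT : x ∈ T n0
  · rw [if_pos hxT] at hmin ⊢
    by_cases hxB : x ∈ B
    · rw [if_pos hxB] at hmin ⊢; linarith [habs.1, habs.2]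
    · rw [if_neg hxB] at hmin ⊢; linarith [habs.1, habs.2]
  · rw [if_neg hxT] at hmin ⊢
    by_cases hxB : x ∈ B
    · rw [if_pos hxB] at hmin ⊢; linarith [habs.1, habs.2]
    · rw [if_neg hxB] at hmin ⊢; linarith [habs.1, habs.2]

lemma extend_aux {M : Matroid α} (hE : M.E.Finite) {A : α → Set ℝ} (hA : IsAreaFun M A)
    (Q : Set α → Prop)
    (H : ∀ w, Realization M A w → ∃ T, IsMinBasis M w T ∧ Q T) :
    ∀ w, (∀ x ∈ M.E, w x ∈ Set.Icc (sInf (A x)) (sSup (A x))) →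
      ∃ T, IsMinBasis M w T ∧ Q T := by
  suffices h : ∀ F : Finset α, ↑F ⊆ M.E → ∀ w : α → ℝ,
      (∀ x ∈ M.E, x ∈ F → w x ∈ Set.Icc (sInf (A x)) (sSup (A x))) →
      (∀ x ∈ M.E, x ∉ F → w x ∈ A x) →
      ∃ T, IsMinBasis M w T ∧ Q T by
    intro w hw
    refine h hE.toFinset (by simp) w (fun x hx _ => hw x hx) (fun x hx hx' => ?_)
    exact absurd (hE.mem_toFinset.2 hx) hx'
  intro F
  induction F using Finset.induction_on with
  | empty =>
    intro _ w _ h2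
    exact H w (fun x hx => h2 x hx (Finset.notMem_empty x))
  | insert a F ha IH =>
    intro hsub w h1 h2
    have haE : a ∈ M.E := hsub (Finset.mem_insert_self a F)
    obtain ⟨hne, hbb, hba⟩ := hA a haE
    have key : ∀ s ∈ A a, ∃ T, IsMinBasis M (Function.update w a s) T ∧ Q T := by
      intro s hsmem
      refine IH (fun y hy => hsub (Finset.mem_insert_of_mem hy)) (Function.update w a s)
        (fun y hyE hyF => ?_) (fun y hyE hyF => ?_)
      · have hya : y ≠ a := fun h => ha (h ▸ hyF)
        rw [Function.update_of_ne hya]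
        exact h1 y hyE (Finset.mem_insert_of_mem hyF)
      · by_cases hya : y = a
        · subst hya; rw [Function.update_self]; exact hsmem
        · rw [Function.update_of_ne hya]
          exact h2 y hyE (fun h => (Finset.mem_insert.1 h).elim hya hyF)
    have hinf : ∃ T, IsMinBasis M (Function.update w a (sInf (A a))) T ∧ Q T := by
      refine approx_aux hE Q w a _ (fun n => ?_)
      have hpos : (0:ℝ) < 1/(n+1) := by positivity
      obtain ⟨u, hu, hu'⟩ := exists_lt_of_csInf_lt hne (by linarith : sInf (A a) < sInf (A a) + 1/(n+1))
      have hge : sInf (A a) ≤ u := csInf_le hbb hu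
      exact ⟨u, abs_le.2 ⟨by linarith, by linarith⟩, key u hu⟩
    have hsup : ∃ T, IsMinBasis M (Function.update w a (sSup (A a))) T ∧ Q T := by
      refine approx_aux hE Q w a _ (fun n => ?_)
      have hpos : (0:ℝ) < 1/(n+1) := by positivity
      obtain ⟨u, hu, hu'⟩ := exists_lt_of_lt_csSup hne (by linarith : sSup (A a) - 1/(n+1) < sSup (A a))
      have hle : u ≤ sSup (A a) := le_csSup hba hu
      exact ⟨u, abs_le.2 ⟨by linarith, by linarith⟩, key u hu⟩
    have hwa := h1 a haE (Finset.mem_insert_self a F)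
    have := convex_aux hE Q w a hwa.1 hwa.2 hinf hsup
    rwa [Function.update_eq_self] at this

/-- Colors only depend on the infima and suprema of the areas; in particular `(M, A)` and
`(M, cl A)` have the same blue and red elements. -/
theorem colors_depend_only_on_inf_sup (M : Matroid α) (A B : α → Set ℝ)
    (hE : M.E.Finite) (hA : IsAreaFun M A) (hB : IsAreaFun M B)
    (hinf : ∀ e ∈ M.E, sInf (A e) = sInf (B e))
    (hsup : ∀ e ∈ M.E, sSup (A e) = sSup (B e)) :
    (∀ e ∈ M.E, (Blue M A e ↔ Blue M B e) ∧ (Red M A e ↔ Red M B e)) ∧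
    (∀ e ∈ M.E,
      (Blue M A e ↔ Blue M (fun x => Set.Icc (sInf (A x)) (sSup (A x))) e) ∧
      (Red M A e ↔ Red M (fun x => Set.Icc (sInf (A x)) (sSup (A x))) e)) := by
  have hBA : ∀ w, Realization M B w →
      ∀ x ∈ M.E, w x ∈ Set.Icc (sInf (A x)) (sSup (A x)) := by
    intro w hw x hx
    have hwx := hw x hx
    exact ⟨(hinf x hx).symm ▸ csInf_le (hB x hx).2.1 hwx,
      (hsup x hx).symm ▸ le_csSup (hB x hx).2.2 hwx⟩
  have hAB : ∀ w, Realization M A w →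
      ∀ x ∈ M.E, w x ∈ Set.Icc (sInf (B x)) (sSup (B x)) := by
    intro w hw x hx
    have hwx := hw x hx
    exact ⟨(hinf x hx) ▸ csInf_le (hA x hx).2.1 hwx,
      (hsup x hx) ▸ le_csSup (hA x hx).2.2 hwx⟩
  have hAIcc : ∀ w, Realization M A w →
      ∀ x ∈ M.E, w x ∈ Set.Icc (sInf (A x)) (sSup (A x)) := by
    intro w hw x hx
    exact ⟨csInf_le (hA x hx).2.1 (hw x hx), le_csSup (hA x hx).2.2 (hw x hx)⟩
  constructor
  · intro e _
    constructor
    · constructor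
      · intro h w hw
        exact extend_aux hE hA (fun T => e ∈ T) h w (hBA w hw)
      · intro h w hw
        exact extend_aux hE hB (fun T => e ∈ T) h w (hAB w hw)
    · constructor
      · intro h w hw
        exact extend_aux hE hA (fun T => e ∉ T) h w (hBA w hw)
      · intro h w hw
        exact extend_aux hE hB (fun T => e ∉ T) h w (hAB w hw)
  · intro e _
    constructor
    · constructor
      · intro h w hw
        exact extend_aux hE hA (fun T => e ∈ T) h w hw
      · intro h w hw
        exact h w (hAIcc w hw)
    · constructor
      · intro h w hw
        exact extend_aux hE hA (fun T => e ∉ T) h w hw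
      · intro h w hw
        exact h w (hAIcc w hw)
end
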